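/- arXiv:0709.0824 — 7 statements merged into one kernel-verified Lean document; each statement's English description precedes it below -/
import Mathlib

section
/- Let A be an n×n Hermitian complex matrix. There exists an n×n unitary matrix T such that all diagonal entries of T†AT vanish, i.e. (T†AT)_{jj} = 0 for all j = 1,…,n, if and only if Tr[A] = 0. -/
open scoped BigOperators Matrix
open Complex Real

noncomputable def eC (x : ℝ) : ℂ := Complex.exp (x * Complex.I)

lemma eC_mul (x y : ℝ) : eC x * eC y = eC (x + y) := by
  rw [eC, eC, eC, ← Complex.exp_add]; push_cast; ring_nf

lemma eC_conj (x : ℝ) : (starRingEnd ℂ) (eC x) = eC (-x) := by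
  rw [eC, eC, ← Complex.exp_conj, map_mul, Complex.conj_I, Complex.conj_ofReal]
  push_cast; ring_nf

lemma eC_pow (x : ℝ) (m : ℕ) : eC x ^ m = eC (m * x) := by
  rw [eC, eC, ← Complex.exp_nat_mul]; push_cast; ring_nf

lemma eC_zero : eC 0 = 1 := by simp [eC]

lemma eC_int_two_pi (d : ℤ) : eC (2 * π * d) = 1 := by
  rw [eC]
  have := Complex.exp_int_mul_two_pi_mul_I d
  rw [← this]; congr 1; push_cast; ring

lemma eC_sum_delta (n : ℕ) (hn : n ≠ 0) (d : ℤ) :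
    ∑ m ∈ Finset.range n, eC (2 * π * d * m / n) = if (n : ℤ) ∣ d then (n : ℂ) else 0 := by
  have hn' : (n : ℝ) ≠ 0 := Nat.cast_ne_zero.mpr hn
  by_cases hdvd : (n : ℤ) ∣ d
  · obtain ⟨c, rfl⟩ := hdvd
    rw [if_pos ⟨c, rfl⟩]
    have : ∀ m ∈ Finset.range n, eC (2 * π * ((n:ℤ) * c : ℤ) * m / n) = 1 := by
      intro m _
      have h1 : (2 * π * (((n:ℤ) * c : ℤ) : ℝ) * m / n : ℝ) = 2 * π * ((c * m : ℤ) : ℝ) := by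
        field_simp; push_cast; ring
      rw [h1]; exact eC_int_two_pi (c * m)
    rw [Finset.sum_congr rfl this]; simp
  · rw [if_neg hdvd]
    set ω : ℂ := eC (2 * π * d / n) with hω
    have hpow : ∀ m ∈ Finset.range n, eC (2 * π * d * m / n) = ω ^ m := by
      intro m _
      rw [hω, eC_pow]; congr 1; field_simp
    rw [Finset.sum_congr rfl hpow]
    have hω1 : ω ≠ 1 := by
      intro h
      rw [hω, eC, Complex.exp_eq_one_iff] at h
      obtain ⟨k, hk⟩ := h
      apply hdvd
      refine ⟨k, ?_⟩
      have hI : (Complex.I : ℂ) ≠ 0 := Complex.I_ne_zero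
      push_cast at hk
      have hk' : (2 * (π:ℂ) * (d:ℂ) / (n:ℂ)) * Complex.I = ((k:ℂ) * (2*π)) * Complex.I := by
        linear_combination hk
      have h2c : (2 * (π:ℂ) * (d:ℂ) / (n:ℂ)) = (k:ℂ) * (2*(π:ℂ)) := mul_right_cancel₀ hI hk'
      have h4 : (2 * π * (d:ℝ) / n) = (k:ℝ) * (2*π) := by exact_mod_cast h2c
      have h2π : (2*π : ℝ) ≠ 0 := by positivity
      have h7 : (2*π) * (d:ℝ) = (2*π) * ((n:ℝ)*k) := by
        have h8 := congrArg (fun x : ℝ => x * (n:ℝ)) h4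
        simp only [div_mul_cancel₀ _ hn'] at h8
        linear_combination h8
      have h9 : (d:ℝ) = (n:ℝ)*k := mul_left_cancel₀ h2π h7
      exact_mod_cast h9
    have hωn : ω ^ n = 1 := by
      rw [hω, eC_pow]
      have heq : ((n : ℝ) * (2 * π * d / n) : ℝ) = 2 * π * (d : ℝ) := by field_simp
      rw [heq]; exact eC_int_two_pi d
    rw [geom_sum_eq hω1, hωn]; simp

noncomputable def Fmat (n : ℕ) : Matrix (Fin n) (Fin n) ℂ :=
  fun j k => eC (2 * π * ((j : ℕ) * (k : ℕ)) / n) * ((1 / Real.sqrt n : ℝ) : ℂ)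

lemma Fmat_conj_mul (n : ℕ) (hn : n ≠ 0) (m j k : Fin n) :
    (starRingEnd ℂ) (Fmat n m j) * Fmat n m k
      = eC (2 * π * (((((k : ℕ) : ℤ) - ((j : ℕ) : ℤ)) : ℤ) : ℝ) * m / n) * ((1 / n : ℝ) : ℂ) := by
  have hn' : (n : ℝ) ≠ 0 := Nat.cast_ne_zero.mpr hn
  unfold Fmat
  rw [map_mul, eC_conj, Complex.conj_ofReal]
  have key : eC (-(2 * π * ((m : ℕ) * (j : ℕ)) / n)) * eC (2 * π * ((m : ℕ) * (k : ℕ)) / n)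
      = eC (2 * π * (((((k : ℕ) : ℤ) - ((j : ℕ) : ℤ)) : ℤ) : ℝ) * m / n) := by
    rw [eC_mul]; congr 1; push_cast; ring
  have hsq : ((1 / Real.sqrt n : ℝ) : ℂ) * ((1 / Real.sqrt n : ℝ) : ℂ) = ((1 / n : ℝ) : ℂ) := by
    rw [← Complex.ofReal_mul]
    congr 1
    rw [div_mul_div_comm, one_mul, Real.mul_self_sqrt (Nat.cast_nonneg n)]
  calc (eC (-(2 * π * ((m : ℕ) * (j : ℕ)) / n)) * ((1 / Real.sqrt n : ℝ) : ℂ)) *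
        (eC (2 * π * ((m : ℕ) * (k : ℕ)) / n) * ((1 / Real.sqrt n : ℝ) : ℂ))
      = (eC (-(2 * π * ((m : ℕ) * (j : ℕ)) / n)) * eC (2 * π * ((m : ℕ) * (k : ℕ)) / n)) *
        (((1 / Real.sqrt n : ℝ) : ℂ) * ((1 / Real.sqrt n : ℝ) : ℂ)) := by ring
    _ = _ := by rw [key, hsq]

lemma fin_dvd_iff (n : ℕ) (j k : Fin n) :
    ((n : ℤ) ∣ (((k : ℕ) : ℤ) - ((j : ℕ) : ℤ))) ↔ j = k := by
  constructor
  · rintro ⟨c, hc⟩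
    have hj : ((j : ℕ) : ℤ) < n := by exact_mod_cast j.isLt
    have hk : ((k : ℕ) : ℤ) < n := by exact_mod_cast k.isLt
    have hj0 : (0 : ℤ) ≤ ((j : ℕ) : ℤ) := Int.ofNat_nonneg _
    have hk0 : (0 : ℤ) ≤ ((k : ℕ) : ℤ) := Int.ofNat_nonneg _
    have hn0 : (0 : ℤ) < n := by omega
    have hc0 : c = 0 := by nlinarith
    subst hc0
    simp only [mul_zero] at hc
    have : (j : ℕ) = (k : ℕ) := by omega
    exact Fin.ext this
  · rintro rfl; simp

lemma Fmat_unitary (n : ℕ) (hn : n ≠ 0) : Fmat n ∈ Matrix.unitaryGroup (Fin n) ℂ := by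
  have hn' : (n : ℝ) ≠ 0 := Nat.cast_ne_zero.mpr hn
  rw [Matrix.mem_unitaryGroup_iff']
  ext j k
  show ∑ m, star (Fmat n) j m * Fmat n m k = (1 : Matrix (Fin n) (Fin n) ℂ) j k
  set d : ℤ := ((k : ℕ) : ℤ) - ((j : ℕ) : ℤ) with hd
  have hentry : ∀ m : Fin n, star (Fmat n) j m * Fmat n m k
      = eC (2 * π * (d : ℝ) * m / n) * ((1 / n : ℝ) : ℂ) := by
    intro m
    rw [Matrix.star_apply, Complex.star_def]
    exact Fmat_conj_mul n hn m j k
  rw [Finset.sum_congr rfl fun m _ => hentry m, ← Finset.sum_mul]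
  have hsum : ∑ m : Fin n, eC (2 * π * (d : ℝ) * (m : ℕ) / n)
      = if (n : ℤ) ∣ d then (n : ℂ) else 0 := by
    rw [← eC_sum_delta n hn d]
    exact Fin.sum_univ_eq_sum_range (fun m : ℕ => eC (2 * π * (d : ℝ) * m / n)) n
  rw [hsum]
  by_cases h : j = k
  · subst h
    rw [if_pos ((fin_dvd_iff n j j).mpr rfl), Matrix.one_apply_eq]
    push_cast
    rw [mul_one_div]
    exact div_self (show (n:ℂ) ≠ 0 from Nat.cast_ne_zero.mpr hn)
  · rw [if_neg (fun hdvd => h ((fin_dvd_iff n j k).mp hdvd)), zero_mul,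
      Matrix.one_apply_ne (fun e => h e)]

lemma Fmat_diag (n : ℕ) (hn : n ≠ 0) (d : Fin n → ℂ) (j : Fin n) :
    ((Fmat n)ᴴ * Matrix.diagonal d * Fmat n) j j = (∑ l, d l) / n := by
  rw [Matrix.mul_apply]
  have hterm : ∀ l : Fin n, ((Fmat n)ᴴ * Matrix.diagonal d) j l * Fmat n l j
      = d l * ((1 / n : ℝ) : ℂ) := by
    intro l
    rw [Matrix.mul_diagonal, Matrix.conjTranspose_apply, Complex.star_def]
    have := Fmat_conj_mul n hn l j j
    have harg : eC (2 * π * (((((j : ℕ) : ℤ) - ((j : ℕ) : ℤ)) : ℤ) : ℝ) * l / n) = 1 := by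
      simp [eC_zero]
    rw [harg, one_mul] at this
    calc (starRingEnd ℂ) (Fmat n l j) * d l * Fmat n l j
        = ((starRingEnd ℂ) (Fmat n l j) * Fmat n l j) * d l := by ring
      _ = d l * ((1 / n : ℝ) : ℂ) := by rw [this]; ring
  rw [Finset.sum_congr rfl fun l _ => hterm l, ← Finset.sum_mul]
  push_cast
  rw [mul_one_div]

/-- A Hermitian complex matrix can be unitarily conjugated to have zero diagonal
if and only if it is traceless. -/
theorem hermitian_offdiagonalizable_iff_traceless
    (n : ℕ) (A : Matrix (Fin n) (Fin n) ℂ) (hA : A.IsHermitian) :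
    (∃ T : Matrix (Fin n) (Fin n) ℂ, T ∈ Matrix.unitaryGroup (Fin n) ℂ ∧
      ∀ j, (Tᴴ * A * T) j j = 0) ↔ A.trace = 0 := by
  constructor
  · rintro ⟨T, hT, hdiag⟩
    have hTT : T * Tᴴ = 1 := by
      rw [← Matrix.star_eq_conjTranspose]
      exact Matrix.mem_unitaryGroup_iff.mp hT
    have h1 : (Tᴴ * A * T).trace = A.trace := by
      rw [Matrix.trace_mul_cycle, hTT, Matrix.one_mul]
    rw [← h1]
    simp [Matrix.trace, Matrix.diag, hdiag]
  · intro htr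
    rcases Nat.eq_zero_or_pos n with hn0 | hnpos
    · subst hn0
      exact ⟨1, one_mem _, fun j => j.elim0⟩
    · have hn : n ≠ 0 := hnpos.ne'
      set U : Matrix (Fin n) (Fin n) ℂ := (hA.eigenvectorUnitary : Matrix (Fin n) (Fin n) ℂ) with hU
      set Dm : Matrix (Fin n) (Fin n) ℂ :=
        Matrix.diagonal (RCLike.ofReal ∘ hA.eigenvalues) with hDm
      have hspec : A = U * Dm * star U := hA.spectral_theorem
      have hsU : star U * U = 1 := Matrix.mem_unitaryGroup_iff'.mp (hA.eigenvectorUnitary).2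
      have hcancel : ∀ X : Matrix (Fin n) (Fin n) ℂ, X * star U * U = X := by
        intro X; rw [Matrix.mul_assoc, hsU, Matrix.mul_one]
      refine ⟨U * Fmat n, mul_mem (hA.eigenvectorUnitary).2 (Fmat_unitary n hn), ?_⟩
      intro j
      have hconj : (U * Fmat n)ᴴ * A * (U * Fmat n) = (Fmat n)ᴴ * Dm * Fmat n := by
        rw [Matrix.conjTranspose_mul, ← Matrix.star_eq_conjTranspose U, hspec]
        simp only [← Matrix.mul_assoc]
        rw [hcancel ((Fmat n)ᴴ), hcancel ((Fmat n)ᴴ * Dm)]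
      rw [hconj, Fmat_diag n hn _ j]
      have htrD : A.trace = ∑ l, (RCLike.ofReal ∘ hA.eigenvalues : Fin n → ℂ) l := by
        conv_lhs => rw [hspec]
        rw [Matrix.trace_mul_cycle, hsU, Matrix.one_mul, hDm, Matrix.trace_diagonal]
      have hsum0 : ∑ l, (RCLike.ofReal ∘ hA.eigenvalues : Fin n → ℂ) l = 0 := by
        rw [← htrD]; exact htr
      rw [hsum0, zero_div]
end

section
/- Let ρ be a positive semidefinite Hermitian matrix on ℂ² ⊗ ℂ² (a 4×4 matrix) whose partial traces satisfy Tr₁ρ = Tr₂ρ = 𝟙/2 (in particular Tr ρ = 1). Then there exists an orthonormal basis of ℂ² ⊗ ℂ² consisting of eigenvectors v_j of ρ such that for every j, Tr₂|v_j⟩⟨v_j| = 𝟙/2 (equivalently, each eigenvector is maximally entangled). -/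
open scoped BigOperators Matrix ComplexOrder

noncomputable section

/-- Partial trace over the first tensor factor. -/
def ptrace1 (d : ℕ) (ρ : Matrix (Fin d × Fin d) (Fin d × Fin d) ℂ) :
    Matrix (Fin d) (Fin d) ℂ :=
  Matrix.of fun j l => ∑ i, ρ (i, j) (i, l)

/-- Partial trace over the second tensor factor. -/
def ptrace2 (d : ℕ) (ρ : Matrix (Fin d × Fin d) (Fin d × Fin d) ℂ) :
    Matrix (Fin d) (Fin d) ℂ :=
  Matrix.of fun i k => ∑ j, ρ (i, j) (k, j)

/-- The rank-one projector |ψ⟩⟨ψ|. -/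
def outer {n : Type*} [Fintype n] (ψ : n → ℂ) : Matrix n n ℂ :=
  Matrix.of fun p q => ψ p * star (ψ q)

namespace MEnt

def c : ℂ := (Real.sqrt 2 : ℂ)⁻¹

lemma hc2 : c * c = 2⁻¹ := by
  rw [c, ← mul_inv, ← Complex.ofReal_mul, Real.mul_self_sqrt (by norm_num)]
  norm_num

lemma hcstar : (starRingEnd ℂ) c = c := by
  simp [c, map_inv₀, Complex.conj_ofReal]

/-- √2 times the magic basis, as a matrix whose columns are the (unnormalized)
magic basis vectors. -/
def N : Matrix (Fin 2 × Fin 2) (Fin 4) ℂ :=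
  Matrix.of fun p j =>
    if p.1.val = 0 then
      (if p.2.val = 0 then (if j.val = 0 then 1 else if j.val = 1 then -Complex.I else 0)
       else (if j.val = 2 then 1 else if j.val = 3 then -Complex.I else 0))
    else
      (if p.2.val = 0 then (if j.val = 2 then -1 else if j.val = 3 then -Complex.I else 0)
       else (if j.val = 0 then 1 else if j.val = 1 then Complex.I else 0))

lemma fin4_val3 : ((3 : Fin 4) : ℕ) = 3 := rfl
lemma fin4_val2 : ((2 : Fin 4) : ℕ) = 2 := rfl

lemma N_unit1 : Nᴴ * N = (2:ℂ) • 1 := by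
  ext a b
  rw [Matrix.mul_apply, Fintype.sum_prod_type]
  fin_cases a <;> fin_cases b <;>
    norm_num [N, Fin.sum_univ_two, Matrix.conjTranspose_apply, Matrix.one_apply,
      fin4_val3, fin4_val2, Matrix.smul_apply, Complex.ext_iff]

lemma N_unit2 : N * Nᴴ = (2:ℂ) • 1 := by
  ext p q
  rw [Matrix.mul_apply, Fin.sum_univ_four]
  fin_cases p <;> fin_cases q <;>
    norm_num [N, Matrix.conjTranspose_apply, Matrix.one_apply, fin4_val3, fin4_val2,
      Matrix.smul_apply, Complex.ext_iff, Prod.ext_iff, (by decide : (2:Fin 4) ≠ 0), (by decide : (3:Fin 4) ≠ 0)]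

def flip : Fin 2 × Fin 2 → Fin 2 × Fin 2 := fun p => (![1,0] p.1, ![1,0] p.2)

def sgn : Fin 2 × Fin 2 → ℂ := fun p => if p.1 = p.2 then -1 else 1

lemma flip_flip : Function.Involutive flip := by
  intro p; fin_cases p <;> simp [flip]

lemma sgn_flip (p : Fin 2 × Fin 2) : sgn (flip p) = sgn p := by
  fin_cases p <;> simp [sgn, flip]

lemma sgn_sq (p : Fin 2 × Fin 2) : sgn p * sgn p = 1 := by
  fin_cases p <;> norm_num [sgn]

lemma conjN (p : Fin 2 × Fin 2) (a : Fin 4) :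
    (starRingEnd ℂ) (N p a) = -(sgn p * N (flip p) a) := by
  fin_cases p <;> fin_cases a <;>
    norm_num [N, sgn, flip, Complex.ext_iff]

lemma N_flip (p : Fin 2 × Fin 2) (a : Fin 4) :
    N (flip p) a = -(sgn p * (starRingEnd ℂ) (N p a)) := by
  fin_cases p <;> fin_cases a <;>
    norm_num [N, sgn, flip, Complex.ext_iff]

lemma spinflip (ρ : Matrix (Fin 2 × Fin 2) (Fin 2 × Fin 2) ℂ)
    (hH : ρ.IsHermitian)
    (h1 : ptrace1 2 ρ = (2:ℂ)⁻¹ • 1) (h2 : ptrace2 2 ρ = (2:ℂ)⁻¹ • 1) :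
    ∀ p q, ρ p q = sgn p * sgn q * (starRingEnd ℂ) (ρ (flip p) (flip q)) := by
  have H : ∀ a b, (starRingEnd ℂ) (ρ a b) = ρ b a := fun a b => hH.apply b a
  have E1 : ∀ j l, ρ (0,j) (0,l) + ρ (1,j) (1,l) = if j = l then (2:ℂ)⁻¹ else 0 := by
    intro j l
    have := congrFun (congrFun h1 j) l
    simpa [ptrace1, Fin.sum_univ_two, Matrix.smul_apply, Matrix.one_apply,
      mul_ite, mul_one, mul_zero] using this
  have E2 : ∀ i k, ρ (i,0) (k,0) + ρ (i,1) (k,1) = if i = k then (2:ℂ)⁻¹ else 0 := by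
    intro i k
    have := congrFun (congrFun h2 i) k
    simpa [ptrace2, Fin.sum_univ_two, Matrix.smul_apply, Matrix.one_apply,
      mul_ite, mul_one, mul_zero] using this
  have e100 := E1 0 0; have e101 := E1 0 1; have e110 := E1 1 0; have e111 := E1 1 1
  have e200 := E2 0 0; have e201 := E2 0 1; have e210 := E2 1 0; have e211 := E2 1 1
  norm_num [Fin.ext_iff] at e100 e101 e110 e111 e200 e201 e210 e211
  intro p q
  fin_cases p <;> fin_cases q <;>
    norm_num [flip, sgn, H, Fin.mk_zero, Fin.mk_one, Prod.ext_iff, Fin.ext_iff]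
  all_goals try ring
  all_goals try (linear_combination e101)
  all_goals try (linear_combination e110)
  all_goals try (linear_combination e201)
  all_goals try (linear_combination e210)
  all_goals try (linear_combination e200 - e111)
  all_goals try (linear_combination e111 - e200)
  all_goals try (linear_combination e100 - e200)
  all_goals try (linear_combination e200 - e100)

/-- the magic-basis property: a real unit combination of columns of `N` (scaled by `c`)
is maximally entangled. -/
lemma magic (x : Fin 4 → ℝ) (hx : ∑ a, x a * x a = 1) :
    ptrace2 2 (outer (fun p => c * ∑ a, N p a * (x a : ℂ))) = (2:ℂ)⁻¹ • 1 := by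
  have hx4 : ((x 0 : ℂ))*(x 0) + (x 1)*(x 1) + (x 2)*(x 2) + (x 3)*(x 3) = 1 := by
    rw [Fin.sum_univ_four] at hx; exact_mod_cast hx
  ext i k
  simp only [ptrace2, outer, Matrix.of_apply, Fin.sum_univ_two, Fin.sum_univ_four,
    Matrix.smul_apply, Matrix.one_apply, smul_eq_mul]
  fin_cases i <;> fin_cases k <;>
    norm_num [N, fin4_val3, fin4_val2, star_mul', star_sum, hcstar,
      Complex.conj_ofReal, Complex.star_def, Complex.conj_I, (by decide : (2:Fin 4) ≠ 0), (by decide : (3:Fin 4) ≠ 0)]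
  all_goals try ring
  all_goals try (linear_combination (((x 0:ℂ)^2+(x 1:ℂ)^2+(x 2:ℂ)^2+(x 3:ℂ)^2) * hc2 - (c*c*((x 1:ℂ)^2+(x 3:ℂ)^2)) * Complex.I_sq + 2⁻¹ * hx4))


lemma key (ρ : Matrix (Fin 2 × Fin 2) (Fin 2 × Fin 2) ℂ)
    (hsf : ∀ p q, ρ p q = sgn p * sgn q * (starRingEnd ℂ) (ρ (flip p) (flip q)))
    (a b : Fin 4) :
    ∑ p, ∑ q, (starRingEnd ℂ) (N p a) * (ρ p q * N q b)
      = ∑ p, ∑ q, N p a * ((starRingEnd ℂ) (ρ p q) * (starRingEnd ℂ) (N q b)) := by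
  refine Fintype.sum_equiv flip_flip.toPerm _ _ ?_
  intro p
  refine Fintype.sum_equiv flip_flip.toPerm _ _ ?_
  intro q
  simp only [Function.Involutive.coe_toPerm]
  rw [hsf p q, conjN p a]
  rw [show (starRingEnd ℂ) (N (flip q) b) = -(sgn q * N q b) from by
    rw [conjN (flip q) b, flip_flip q, sgn_flip q]]
  linear_combination (-(sgn q * N (flip p) a * ((starRingEnd ℂ) (ρ (flip p) (flip q))) * N q b)) * sgn_sq p

lemma Aexpand (ρ : Matrix (Fin 2 × Fin 2) (Fin 2 × Fin 2) ℂ) (a b : Fin 4) :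
    (Nᴴ * ρ * N) a b = ∑ p, ∑ q, (starRingEnd ℂ) (N p a) * (ρ p q * N q b) := by
  simp only [Matrix.mul_apply, Matrix.conjTranspose_apply, Finset.sum_mul, Complex.star_def]
  rw [Finset.sum_comm]
  refine Finset.sum_congr rfl fun p _ => Finset.sum_congr rfl fun q _ => by ring

lemma Areal (ρ : Matrix (Fin 2 × Fin 2) (Fin 2 × Fin 2) ℂ)
    (hH : ρ.IsHermitian)
    (h1 : ptrace1 2 ρ = (2:ℂ)⁻¹ • 1) (h2 : ptrace2 2 ρ = (2:ℂ)⁻¹ • 1) (a b : Fin 4) :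
    (starRingEnd ℂ) ((Nᴴ * ρ * N) a b) = (Nᴴ * ρ * N) a b := by
  have hsf := spinflip ρ hH h1 h2
  rw [Aexpand ρ a b]
  simp only [map_sum, map_mul, Complex.conj_conj]
  exact (key ρ hsf a b).symm

end MEnt

open MEnt

/-- A two-qubit state with both partial traces maximally mixed admits an orthonormal
eigenbasis consisting of maximally entangled vectors. -/
theorem eigenbasis_maximally_entangled_of_doubly_stochastic
    (ρ : Matrix (Fin 2 × Fin 2) (Fin 2 × Fin 2) ℂ) (hρ : ρ.PosSemidef)
    (h1 : ptrace1 2 ρ = (2 : ℂ)⁻¹ • 1) (h2 : ptrace2 2 ρ = (2 : ℂ)⁻¹ • 1) :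
    ∃ v : Fin 4 → (Fin 2 × Fin 2) → ℂ,
      (∀ j k, ∑ q, star (v j q) * v k q = if j = k then 1 else 0) ∧
      (∀ j, ∃ μ : ℝ, ρ.mulVec (v j) = (μ : ℂ) • v j) ∧
      (∀ j, ptrace2 2 (outer (v j)) = (2 : ℂ)⁻¹ • 1) := by
  classical
  have hH : ρ.IsHermitian := hρ.1
  set A : Matrix (Fin 4) (Fin 4) ℂ := Nᴴ * ρ * N with hA
  have hAr : ∀ a b, (starRingEnd ℂ) (A a b) = A a b := fun a b => Areal ρ hH h1 h2 a b
  have hAherm : A.IsHermitian := by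
    have : Aᴴ = A := by
      rw [hA]
      simp [Matrix.conjTranspose_mul, Matrix.mul_assoc, hH.eq]
    exact this
  set B : Matrix (Fin 4) (Fin 4) ℝ := Matrix.of (fun a b => (A a b).re) with hBdef
  have hAB : A = B.map Complex.ofReal := by
    ext a b
    simp only [Matrix.map_apply, hBdef, Matrix.of_apply]
    exact (Complex.conj_eq_iff_re.mp (hAr a b)).symm
  have hB : B.IsHermitian := by
    rw [Matrix.IsHermitian]
    ext a b
    simp only [Matrix.conjTranspose_apply, hBdef, Matrix.of_apply, star_trivial]
    have h := hAherm.apply a b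
    rw [← h]
    exact Complex.conj_re (A b a)
  set w : Fin 4 → Fin 4 → ℝ := fun j => (hB.eigenvectorBasis j : EuclideanSpace ℝ (Fin 4))
    with hwdef
  set wc : Fin 4 → Fin 4 → ℂ := fun j a => ((w j a : ℝ) : ℂ) with hwc
  set v : Fin 4 → (Fin 2 × Fin 2) → ℂ := fun j => MEnt.c • (N *ᵥ wc j) with hv
  have horth : ∀ j k, (∑ a, w j a * w k a) = if j = k then (1:ℝ) else 0 := by
    intro j k
    have := orthonormal_iff_ite.mp hB.eigenvectorBasis.orthonormal j k
    simpa [PiLp.inner_apply, RCLike.inner_apply, starRingEnd_apply, star_trivial,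
      hwdef, mul_comm] using this
  have heig : ∀ j, B *ᵥ w j = hB.eigenvalues j • w j := fun j =>
    hB.mulVec_eigenvectorBasis j
  have hsmul1 : ∀ (u : Fin 4 → ℂ), u ᵥ* ((2:ℂ) • (1:Matrix (Fin 4) (Fin 4) ℂ)) = (2:ℂ) • u := by
    intro u
    ext a
    simp [Matrix.vecMul, dotProduct, Matrix.smul_apply, Matrix.one_apply,
      mul_ite, Finset.sum_ite_eq, Pi.smul_apply, smul_eq_mul, mul_comm]
  have hdot : ∀ j k, star (wc j) ⬝ᵥ wc k = ((∑ a, w j a * w k a : ℝ) : ℂ) := by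
    intro j k
    simp [dotProduct, hwc, Pi.star_apply, Complex.conj_ofReal]
  refine ⟨v, ?_, ?_, ?_⟩
  · intro j k
    have expand : ∑ q, star (v j q) * v k q
        = ((starRingEnd ℂ) MEnt.c * MEnt.c) * (star (N *ᵥ wc j) ⬝ᵥ (N *ᵥ wc k)) := by
      simp only [dotProduct, Finset.mul_sum]
      refine Finset.sum_congr rfl fun q _ => ?_
      simp only [hv, Pi.smul_apply, smul_eq_mul, star_mul', Pi.star_apply, Complex.star_def]
      ring
    rw [expand, hcstar, hc2, Matrix.star_mulVec, Matrix.dotProduct_mulVec,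
      Matrix.vecMul_vecMul, N_unit1, hsmul1, smul_dotProduct, hdot, horth]
    by_cases hjk : j = k <;> simp [hjk]
  · intro j
    refine ⟨hB.eigenvalues j / 2, ?_⟩
    have hAv : A *ᵥ wc j = ((hB.eigenvalues j : ℝ) : ℂ) • wc j := by
      funext a
      have hr := congrFun (heig j) a
      simp only [Matrix.mulVec, dotProduct, Pi.smul_apply, smul_eq_mul] at hr
      rw [hAB]
      simp only [Matrix.mulVec, dotProduct, Matrix.map_apply, hwc,
        Pi.smul_apply, smul_eq_mul]
      exact_mod_cast congrArg (Complex.ofReal) hr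
    have hrhoN : ρ * N = (2:ℂ)⁻¹ • (N * A) := by
      have e1 : N * A = (N * Nᴴ) * ρ * N := by
        rw [hA, ← Matrix.mul_assoc, ← Matrix.mul_assoc]
      rw [e1, N_unit2]
      rw [Matrix.smul_mul, Matrix.smul_mul, Matrix.one_mul, smul_smul]
      norm_num
    calc ρ *ᵥ v j = MEnt.c • (ρ *ᵥ (N *ᵥ wc j)) := by
          rw [hv]; exact Matrix.mulVec_smul _ _ _
      _ = MEnt.c • ((ρ * N) *ᵥ wc j) := by rw [Matrix.mulVec_mulVec]
      _ = MEnt.c • ((2:ℂ)⁻¹ • ((N * A) *ᵥ wc j)) := by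
          rw [hrhoN, Matrix.smul_mulVec]
      _ = MEnt.c • ((2:ℂ)⁻¹ • (N *ᵥ (A *ᵥ wc j))) := by rw [Matrix.mulVec_mulVec]
      _ = MEnt.c • ((2:ℂ)⁻¹ • (((hB.eigenvalues j : ℝ) : ℂ) • (N *ᵥ wc j))) := by
          rw [hAv, Matrix.mulVec_smul]
      _ = ((hB.eigenvalues j / 2 : ℝ) : ℂ) • v j := by
          rw [hv]
          simp only [smul_smul]
          congr 1
          push_cast
          ring
  · intro j
    have hx : ∑ a, w j a * w j a = 1 := by
      have := horth j j; simpa using this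
    have hm := magic (w j) hx
    have hveq : v j = fun p => MEnt.c * ∑ a, N p a * ((w j a : ℝ) : ℂ) := by
      funext p
      simp [hv, Matrix.mulVec, dotProduct, hwc, Pi.smul_apply, smul_eq_mul]
    rw [hveq]
    exact hm
end
end

section
/- Let ρ be a Hermitian matrix on ℂ² ⊗ ℂ² (a 4×4 matrix) such that Tr₁ρ = k·𝟙 and Tr₂ρ = k'·𝟙 for some real numbers k, k'. Then there exist real numbers m, m' such that Tr₁(ρ²) = m·𝟙 and Tr₂(ρ²) = m'·𝟙; that is, both partial traces of ρ² are again real multiples of the 2×2 identity. -/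
open scoped BigOperators Matrix

noncomputable section

/-- If a two-qubit Hermitian matrix has both partial traces proportional to the identity,
then so does its square. -/
theorem ptraces_of_sq_scalar
    (ρ : Matrix (Fin 2 × Fin 2) (Fin 2 × Fin 2) ℂ) (hρ : ρ.IsHermitian)
    (k k' : ℝ)
    (h1 : ptrace1 2 ρ = (k : ℂ) • 1) (h2 : ptrace2 2 ρ = (k' : ℂ) • 1) :
    ∃ m m' : ℝ, ptrace1 2 (ρ * ρ) = (m : ℂ) • 1 ∧ ptrace2 2 (ρ * ρ) = (m' : ℂ) • 1 := by
  have E : ∀ j l : Fin 2, ρ (0, j) (0, l) + ρ (1, j) (1, l) = if j = l then (k : ℂ) else 0 := by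
    intro j l
    have h := congrFun (congrFun h1 j) l
    simpa [ptrace1, Fin.sum_univ_two, Matrix.smul_apply, Matrix.one_apply,
      mul_ite, mul_one, mul_zero] using h
  have F : ∀ i m : Fin 2, ρ (i, 0) (m, 0) + ρ (i, 1) (m, 1) = if i = m then (k' : ℂ) else 0 := by
    intro i m
    have h := congrFun (congrFun h2 i) m
    simpa [ptrace2, Fin.sum_univ_two, Matrix.smul_apply, Matrix.one_apply,
      mul_ite, mul_one, mul_zero] using h
  have E00 : ρ (0,0) (0,0) + ρ (1,0) (1,0) = (k:ℂ) := by simpa using E 0 0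
  have E01 : ρ (0,0) (0,1) + ρ (1,0) (1,1) = 0 := by simpa using E 0 1
  have E10 : ρ (0,1) (0,0) + ρ (1,1) (1,0) = 0 := by simpa using E 1 0
  have E11 : ρ (0,1) (0,1) + ρ (1,1) (1,1) = (k:ℂ) := by simpa using E 1 1
  have F00 : ρ (0,0) (0,0) + ρ (0,1) (0,1) = (k':ℂ) := by simpa using F 0 0
  have F01 : ρ (0,0) (1,0) + ρ (0,1) (1,1) = 0 := by simpa using F 0 1
  have F10 : ρ (1,0) (0,0) + ρ (1,1) (0,1) = 0 := by simpa using F 1 0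
  have F11 : ρ (1,0) (1,0) + ρ (1,1) (1,1) = (k':ℂ) := by simpa using F 1 1
  have hsq : (ρ * ρ).IsHermitian := by
    unfold Matrix.IsHermitian at *
    rw [Matrix.conjTranspose_mul, hρ]
  -- abbreviations for entries of the partial traces of ρ²
  have key1 : ∀ j l : Fin 2, ptrace1 2 (ρ * ρ) j l =
      ∑ i : Fin 2, ∑ p : Fin 2, ∑ q : Fin 2, ρ (i, j) (p, q) * ρ (p, q) (i, l) := by
    intro j l
    simp [ptrace1, Matrix.mul_apply, Fintype.sum_prod_type]
  have key2 : ∀ i m : Fin 2, ptrace2 2 (ρ * ρ) i m =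
      ∑ j : Fin 2, ∑ p : Fin 2, ∑ q : Fin 2, ρ (i, j) (p, q) * ρ (p, q) (m, j) := by
    intro i m
    simp [ptrace2, Matrix.mul_apply, Fintype.sum_prod_type]
  -- the (0,0) entries are real
  have hr1 : ∃ m : ℝ, ptrace1 2 (ρ * ρ) 0 0 = (m : ℂ) := by
    rw [← Complex.conj_eq_iff_real]
    simp only [ptrace1, Matrix.of_apply, map_sum]
    exact Finset.sum_congr rfl fun i _ => hsq.apply _ _
  have hr2 : ∃ m : ℝ, ptrace2 2 (ρ * ρ) 0 0 = (m : ℂ) := by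
    rw [← Complex.conj_eq_iff_real]
    simp only [ptrace2, Matrix.of_apply, map_sum]
    exact Finset.sum_congr rfl fun i _ => hsq.apply _ _
  obtain ⟨m, hm⟩ := hr1
  obtain ⟨m', hm'⟩ := hr2
  refine ⟨m, m', ?_, ?_⟩
  · have g01 : ptrace1 2 (ρ * ρ) 0 1 = 0 := by
      rw [key1 0 1]
      simp only [Fin.sum_univ_two]
      linear_combination (ρ (1,0) (1,1) + ρ (0,0) (0,1)) * E00 +
        ((k:ℂ) - ρ (1,0) (1,0) + ρ (0,1) (0,1)) * E01 +
        (-ρ (1,0) (1,1)) * F00 + ρ (1,0) (0,1) * F01 + ρ (0,0) (1,1) * F10 +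
        ρ (1,0) (1,1) * F11
    have g10 : ptrace1 2 (ρ * ρ) 1 0 = 0 := by
      rw [key1 1 0]
      simp only [Fin.sum_univ_two]
      linear_combination (ρ (1,1) (1,0) + ρ (0,1) (0,0)) * E00 +
        ((k:ℂ) - ρ (1,0) (1,0) + ρ (0,1) (0,1)) * E10 +
        (-ρ (1,1) (1,0)) * F00 + ρ (1,1) (0,0) * F01 + ρ (0,1) (1,0) * F10 +
        ρ (1,1) (1,0) * F11
    have g11 : ptrace1 2 (ρ * ρ) 1 1 = ptrace1 2 (ρ * ρ) 0 0 := by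
      rw [key1 1 1, key1 0 0]
      simp only [Fin.sum_univ_two]
      linear_combination ((k':ℂ) - k - ρ (1,0) (1,0) - ρ (0,0) (0,0)) * E00 +
        ((k':ℂ) + k - ρ (1,1) (1,1) - 2 * ρ (1,0) (1,0) + ρ (0,1) (0,1)) * E11 +
        (-(k':ℂ) + 2 * ρ (1,0) (1,0)) * F00 + (-2 * ρ (1,0) (0,0)) * F01 +
        (2 * ρ (0,1) (1,1)) * F10 + ((k':ℂ) - 2 * k + 2 * ρ (1,1) (1,1)) * F11
    ext j l
    fin_cases j <;> fin_cases l <;>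
      simp only [Matrix.smul_apply, Matrix.one_apply, Fin.mk_zero, Fin.mk_one] <;>
      norm_num [hm, g01, g10, g11]
  · have g01 : ptrace2 2 (ρ * ρ) 0 1 = 0 := by
      rw [key2 0 1]
      simp only [Fin.sum_univ_two]
      linear_combination ρ (0,0) (1,0) * E00 + ρ (0,1) (1,0) * E01 +
        ρ (0,0) (1,1) * E10 + ρ (0,1) (1,1) * E11 + (k:ℂ) * F01
    have g10 : ptrace2 2 (ρ * ρ) 1 0 = 0 := by
      rw [key2 1 0]
      simp only [Fin.sum_univ_two]
      linear_combination ρ (1,0) (0,0) * E00 + ρ (1,1) (0,0) * E01 +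
        ρ (1,0) (0,1) * E10 + ρ (1,1) (0,1) * E11 + (k:ℂ) * F10
    have g11 : ptrace2 2 (ρ * ρ) 1 1 = ptrace2 2 (ρ * ρ) 0 0 := by
      rw [key2 1 1, key2 0 0]
      simp only [Fin.sum_univ_two]
      linear_combination (ρ (1,0) (1,0) - ρ (0,0) (0,0)) * E00 +
        (-2 * ρ (0,1) (0,0)) * E01 + (2 * ρ (1,0) (1,1)) * E10 +
        (ρ (1,1) (1,1) - ρ (0,1) (0,1)) * E11 + (-(k:ℂ)) * F00 + (k:ℂ) * F11
    ext j l
    fin_cases j <;> fin_cases l <;>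
      simp only [Matrix.smul_apply, Matrix.one_apply, Fin.mk_zero, Fin.mk_one] <;>
      norm_num [hm', g01, g10, g11]
end
end

section
/- Let ρ be a positive semidefinite matrix on ℂ² ⊗ ℂ² with Tr₁ρ = Tr₂ρ = 𝟙/2. Then ρ is a finite convex combination of maximally entangled pure states: there exist finitely many weights p_j ≥ 0 with Σ_j p_j = 1 and 2×2 unitaries U_j such that ρ = Σ_j p_j (U_j ⊗ 𝟙)|I⟩⟨I|(U_j ⊗ 𝟙)†. (Equivalently, every doubly stochastic completely positive qubit map is a random unitary map.) -/
open scoped BigOperators Matrix Kronecker ComplexOrder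

noncomputable section

/-- The maximally entangled unit vector |I⟩. -/
def maxEnt (d : ℕ) : Fin d × Fin d → ℂ :=
  fun p => if p.1 = p.2 then (↑(Real.sqrt d))⁻¹ else 0

open Complex Matrix

/-- The (unnormalized) magic basis as columns of a matrix. -/
def Bm : Matrix (Fin 2 × Fin 2) (Fin 4) ℂ := Matrix.of fun p k =>
  if k = 0 then (if p = (0,0) then 1 else if p = (1,1) then 1 else 0)
  else if k = 1 then (if p = (0,0) then I else if p = (1,1) then -I else 0)
  else if k = 2 then (if p = (0,1) then I else if p = (1,0) then I else 0)
  else (if p = (0,1) then 1 else if p = (1,0) then -1 else 0)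

/-- Unitary from a real combination of magic basis vectors. -/
def Uo (v : Fin 4 → ℝ) : Matrix (Fin 2) (Fin 2) ℂ :=
  !![(v 0 : ℂ) + v 1 * I, (v 3 : ℂ) + v 2 * I;
     -(v 3 : ℂ) + v 2 * I, (v 0 : ℂ) - v 1 * I]

lemma Bm_mul_conjT : Bm * Bmᴴ = (2:ℂ) • 1 := by
  ext ⟨p1,p2⟩ ⟨q1,q2⟩
  fin_cases p1 <;> fin_cases p2 <;> fin_cases q1 <;> fin_cases q2 <;>
    simp [Bm, Matrix.mul_apply, Fin.sum_univ_four, Matrix.one_apply, Complex.ext_iff,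
      Prod.ext_iff] <;> norm_num

lemma Uo_mul_sum (v : Fin 4 → ℝ) (i i' : Fin 2) :
    ∑ k, Bm (i,i') k * (v k : ℂ) = Uo v i i' := by
  fin_cases i <;> fin_cases i' <;>
    (simp [Bm, Uo, Fin.sum_univ_four, Prod.ext_iff]; try ring)

lemma Uo_unitary (v : Fin 4 → ℝ)
    (hv : v 0 * v 0 + v 1 * v 1 + v 2 * v 2 + v 3 * v 3 = 1) :
    Uo v ∈ Matrix.unitaryGroup (Fin 2) ℂ := by
  have hvC : (v 0 : ℂ) * v 0 + v 1 * v 1 + v 2 * v 2 + v 3 * v 3 = 1 := by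
    exact_mod_cast congrArg (Complex.ofReal) hv
  rw [Matrix.mem_unitaryGroup_iff]
  ext i j
  fin_cases i <;> fin_cases j <;>
    simp [Uo, Matrix.mul_apply, Fin.sum_univ_two, Matrix.one_apply, Complex.star_def,
      map_add, _root_.map_mul, Complex.conj_ofReal, Complex.conj_I] <;>
    first
      | linear_combination hvC - ((v 1 : ℂ) * v 1 + (v 2 : ℂ) * v 2) * Complex.I_sq
      | linear_combination (-(v 1 : ℂ) * v 1 - (v 2 : ℂ) * v 2) * Complex.I_sq - hvC
      | ring
      | linear_combination (v 0 : ℂ) * 0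

lemma sqrt_two_inv_sq : ((Real.sqrt 2 : ℝ) : ℂ)⁻¹ * ((Real.sqrt 2 : ℝ) : ℂ)⁻¹ = 2⁻¹ := by
  rw [← Complex.ofReal_inv, ← Complex.ofReal_mul, ← mul_inv,
    Real.mul_self_sqrt (by norm_num)]
  norm_num

lemma kron_outer (A : Matrix (Fin 2) (Fin 2) ℂ) (p q : Fin 2 × Fin 2) :
    ((A ⊗ₖ (1 : Matrix (Fin 2) (Fin 2) ℂ)) * outer (maxEnt 2) *
      (A ⊗ₖ (1 : Matrix (Fin 2) (Fin 2) ℂ))ᴴ) p q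
      = 2⁻¹ * (A p.1 p.2 * star (A q.1 q.2)) := by
  obtain ⟨p1,p2⟩ := p; obtain ⟨q1,q2⟩ := q
  fin_cases p1 <;> fin_cases p2 <;> fin_cases q1 <;> fin_cases q2 <;>
    simp [Matrix.mul_apply, Fintype.sum_prod_type, Fin.sum_univ_two, outer, maxEnt,
      Matrix.one_apply, Complex.star_def, Complex.conj_ofReal] <;>
    ring_nf <;>
    simp [Complex.conj_ofReal, ← Complex.ofReal_pow, Real.sq_sqrt] <;>
    ring

set_option maxHeartbeats 1600000 in
/-- Landau–Streater / Kümmerer–Maassen for qubits: every two-qubit state with both partial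
traces maximally mixed is a finite convex combination of maximally entangled pure states. -/
theorem doubly_stochastic_qubit_state_mixture_of_maximally_entangled
    (ρ : Matrix (Fin 2 × Fin 2) (Fin 2 × Fin 2) ℂ) (hρ : ρ.PosSemidef)
    (h1 : ptrace1 2 ρ = (2 : ℂ)⁻¹ • 1) (h2 : ptrace2 2 ρ = (2 : ℂ)⁻¹ • 1) :
    ∃ (n : ℕ) (p : Fin n → ℝ) (U : Fin n → Matrix (Fin 2) (Fin 2) ℂ),
      (∀ j, 0 ≤ p j) ∧ (∑ j, p j = 1) ∧
      (∀ j, U j ∈ Matrix.unitaryGroup (Fin 2) ℂ) ∧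
      ρ = ∑ j, (p j : ℂ) •
        ((U j ⊗ₖ (1 : Matrix (Fin 2) (Fin 2) ℂ)) * outer (maxEnt 2) *
          (U j ⊗ₖ (1 : Matrix (Fin 2) (Fin 2) ℂ))ᴴ) := by
  classical
  -- marginal component equations
  have t100 : ρ (0,0) (0,0) + ρ (1,0) (1,0) = 2⁻¹ := by
    simpa [ptrace1, Fin.sum_univ_two, Matrix.one_apply] using congrFun (congrFun h1 0) 0
  have t101 : ρ (0,0) (0,1) + ρ (1,0) (1,1) = 0 := by
    simpa [ptrace1, Fin.sum_univ_two, Matrix.one_apply] using congrFun (congrFun h1 0) 1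
  have t110 : ρ (0,1) (0,0) + ρ (1,1) (1,0) = 0 := by
    simpa [ptrace1, Fin.sum_univ_two, Matrix.one_apply] using congrFun (congrFun h1 1) 0
  have t111 : ρ (0,1) (0,1) + ρ (1,1) (1,1) = 2⁻¹ := by
    simpa [ptrace1, Fin.sum_univ_two, Matrix.one_apply] using congrFun (congrFun h1 1) 1
  have t200 : ρ (0,0) (0,0) + ρ (0,1) (0,1) = 2⁻¹ := by
    simpa [ptrace2, Fin.sum_univ_two, Matrix.one_apply] using congrFun (congrFun h2 0) 0
  have t201 : ρ (0,0) (1,0) + ρ (0,1) (1,1) = 0 := by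
    simpa [ptrace2, Fin.sum_univ_two, Matrix.one_apply] using congrFun (congrFun h2 0) 1
  have t210 : ρ (1,0) (0,0) + ρ (1,1) (0,1) = 0 := by
    simpa [ptrace2, Fin.sum_univ_two, Matrix.one_apply] using congrFun (congrFun h2 1) 0
  have t211 : ρ (1,0) (1,0) + ρ (1,1) (1,1) = 2⁻¹ := by
    simpa [ptrace2, Fin.sum_univ_two, Matrix.one_apply] using congrFun (congrFun h2 1) 1
  have hNPSD : (Bmᴴ * ρ * Bm).PosSemidef := hρ.conjTranspose_mul_mul_same Bm
  -- hermiticity of the Gram matrix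
  have hherm : ∀ k l, star ((Bmᴴ * ρ * Bm) k l) = (Bmᴴ * ρ * Bm) l k := by
    intro k l
    have := congrFun (congrFun hNPSD.1 l) k
    simpa [Matrix.conjTranspose_apply] using this
  -- symmetry of the Gram matrix (this is where the marginal conditions enter)
  have h01 : (Bmᴴ * ρ * Bm) 0 1 = (Bmᴴ * ρ * Bm) 1 0 := by
    simp [Matrix.mul_apply, Fintype.sum_prod_type, Fin.sum_univ_two, Fin.sum_univ_four,
      Bm, Matrix.conjTranspose_apply]
    linear_combination (-2*Complex.I) * t111 + (2*Complex.I) * t200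
  have h02 : (Bmᴴ * ρ * Bm) 0 2 = (Bmᴴ * ρ * Bm) 2 0 := by
    simp [Matrix.mul_apply, Fintype.sum_prod_type, Fin.sum_univ_two, Fin.sum_univ_four,
      Bm, Matrix.conjTranspose_apply]
    linear_combination Complex.I * t101 + Complex.I * t110 + Complex.I * t201 + Complex.I * t210
  have h03 : (Bmᴴ * ρ * Bm) 0 3 = (Bmᴴ * ρ * Bm) 3 0 := by
    simp [Matrix.mul_apply, Fintype.sum_prod_type, Fin.sum_univ_two, Fin.sum_univ_four,
      Bm, Matrix.conjTranspose_apply]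
    linear_combination t101 - t110 - t201 + t210
  have h12 : (Bmᴴ * ρ * Bm) 1 2 = (Bmᴴ * ρ * Bm) 2 1 := by
    simp [Matrix.mul_apply, Fintype.sum_prod_type, Fin.sum_univ_two, Fin.sum_univ_four,
      Bm, Matrix.conjTranspose_apply]
    linear_combination t101 - t110 + t201 - t210 +
      (- ρ (0,0) (0,1) - ρ (0,0) (1,0) + ρ (1,1) (0,1) + ρ (1,1) (1,0)
       + ρ (0,1) (0,0) - ρ (0,1) (1,1) + ρ (1,0) (0,0) - ρ (1,0) (1,1)) * Complex.I_sq
  have h13 : (Bmᴴ * ρ * Bm) 1 3 = (Bmᴴ * ρ * Bm) 3 1 := by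
    simp [Matrix.mul_apply, Fintype.sum_prod_type, Fin.sum_univ_two, Fin.sum_univ_four,
      Bm, Matrix.conjTranspose_apply]
    linear_combination (-Complex.I) * t101 + (-Complex.I) * t110 + Complex.I * t201 + Complex.I * t210
  have h23 : (Bmᴴ * ρ * Bm) 2 3 = (Bmᴴ * ρ * Bm) 3 2 := by
    simp [Matrix.mul_apply, Fintype.sum_prod_type, Fin.sum_univ_two, Fin.sum_univ_four,
      Bm, Matrix.conjTranspose_apply]
    linear_combination (2*Complex.I) * t100 + (-2*Complex.I) * t200
  have hsym : ∀ k l, (Bmᴴ * ρ * Bm) k l = (Bmᴴ * ρ * Bm) l k := by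
    intro k l
    fin_cases k <;> fin_cases l <;>
      first
        | rfl
        | exact h01 | exact h01.symm | exact h02 | exact h02.symm
        | exact h03 | exact h03.symm | exact h12 | exact h12.symm
        | exact h13 | exact h13.symm | exact h23 | exact h23.symm
  have hreal : ∀ k l, (Bmᴴ * ρ * Bm) k l = (((Bmᴴ * ρ * Bm) k l).re : ℂ) := by
    intro k l
    have h := hherm k l
    rw [hsym l k] at h
    exact (Complex.conj_eq_iff_re.mp h).symm
  -- the real Gram matrix
  set Mr : Matrix (Fin 4) (Fin 4) ℝ :=
    Matrix.of (fun k l => ((Bmᴴ * ρ * Bm) k l).re / 2) with hMrdef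
  have hMrC : ∀ k l, (Bmᴴ * ρ * Bm) k l = 2 * ((Mr k l : ℝ) : ℂ) := by
    intro k l
    rw [hreal k l]
    simp [hMrdef]
    push_cast
    ring
  have hMrH : Mr.IsHermitian := by
    ext k l
    simp only [Matrix.conjTranspose_apply, hMrdef, Matrix.of_apply, star_trivial]
    rw [hsym l k]
  have hMrPSD : Mr.PosSemidef := by
    refine .of_dotProduct_mulVec_nonneg hMrH fun x => ?_
    have h0 := hNPSD.dotProduct_mulVec_nonneg (fun k => (x k : ℂ))
    rw [Complex.le_def] at h0
    have h0re : 0 ≤ (star (fun k => (x k : ℂ)) ⬝ᵥ (Bmᴴ * ρ * Bm) *ᵥ (fun k => (x k : ℂ))).re := by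
      simpa using h0.1
    have heq : (star (fun k => (x k : ℂ)) ⬝ᵥ (Bmᴴ * ρ * Bm) *ᵥ (fun k => (x k : ℂ))).re
        = 2 * (star x ⬝ᵥ Mr *ᵥ x) := by
      simp [dotProduct, Matrix.mulVec, Fin.sum_univ_four, hMrdef, Pi.star_apply,
        Complex.star_def, Complex.conj_ofReal, Complex.add_re, Complex.mul_re,
        Complex.ofReal_re, Complex.ofReal_im]
      ring
    rw [heq] at h0re
    linarith
  set V : Matrix (Fin 4) (Fin 4) ℝ := (hMrH.eigenvectorUnitary : Matrix (Fin 4) (Fin 4) ℝ)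
    with hVdef
  set μ : Fin 4 → ℝ := hMrH.eigenvalues with hμdef
  have hμ0 : ∀ j, 0 ≤ μ j := fun j => hMrPSD.eigenvalues_nonneg j
  have hSpec : ∀ k l, Mr k l = ∑ j, V k j * μ j * V l j := by
    intro k l
    have h := congrFun (congrFun hMrH.spectral_theorem k) l
    simpa [Matrix.mul_apply, Matrix.mul_diagonal, Matrix.diagonal_apply, Fin.sum_univ_four,
      Function.comp, RCLike.ofReal, Matrix.conjTranspose_apply, hVdef, hμdef] using h
  have hv : ∀ j, V 0 j * V 0 j + V 1 j * V 1 j + V 2 j * V 2 j + V 3 j * V 3 j = 1 := by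
    intro j
    have h := congrFun (congrFun
      (Unitary.coe_star_mul_self (hMrH.eigenvectorUnitary)) j) j
    simpa [Matrix.mul_apply, Fin.sum_univ_four, Matrix.one_apply,
      Matrix.conjTranspose_apply, hVdef] using h
  -- the decomposition
  refine ⟨4, μ, fun j => Uo (fun k => V k j), hμ0, ?_, ?_, ?_⟩
  · -- sum of weights
    have h00 := hSpec 0 0
    have h11 := hSpec 1 1
    have h22 := hSpec 2 2
    have h33 := hSpec 3 3
    simp only [Fin.sum_univ_four] at h00 h11 h22 h33 ⊢
    have htrace : Mr 0 0 + Mr 1 1 + Mr 2 2 + Mr 3 3 = 1 := by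
      have hdiag : (Bmᴴ * ρ * Bm) 0 0 + (Bmᴴ * ρ * Bm) 1 1
          + (Bmᴴ * ρ * Bm) 2 2 + (Bmᴴ * ρ * Bm) 3 3 = 2 := by
        simp [Matrix.mul_apply, Fintype.sum_prod_type, Fin.sum_univ_two, Fin.sum_univ_four,
          Bm, Matrix.conjTranspose_apply]
        linear_combination 2 * t100 + 2 * t111 +
          (- ρ (0,0) (0,0) - ρ (1,1) (1,1) - ρ (0,1) (0,1) - ρ (1,0) (1,0)
           + ρ (0,0) (1,1) + ρ (1,1) (0,0) - ρ (0,1) (1,0) - ρ (1,0) (0,1)) * Complex.I_sq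
      have := congrArg Complex.re hdiag
      simp only [Complex.add_re] at this
      simp only [hMrdef, Matrix.of_apply]
      norm_num at this ⊢
      linarith
    linear_combination htrace - h00 - h11 - h22 - h33
      - μ 0 * hv 0 - μ 1 * hv 1 - μ 2 * hv 2 - μ 3 * hv 3
  · -- unitarity
    intro j
    exact Uo_unitary _ (hv j)
  · -- the convex decomposition of ρ
    have h4 : Bm * (Bmᴴ * ρ * Bm) * Bmᴴ = (4:ℂ) • ρ := by
      calc Bm * (Bmᴴ * ρ * Bm) * Bmᴴ = (Bm * Bmᴴ) * ρ * (Bm * Bmᴴ) := by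
            simp only [Matrix.mul_assoc]
        _ = ((2:ℂ) • 1) * ρ * ((2:ℂ) • 1) := by rw [Bm_mul_conjT]
        _ = (4:ℂ) • ρ := by
            simp [Matrix.smul_mul, Matrix.mul_smul, smul_smul]
            norm_num
    obtain ⟨NM, hNM⟩ : ∃ M, Bmᴴ * ρ * Bm = M := ⟨_, rfl⟩
    rw [hNM] at h4
    have hrecon : ∀ p q, (4:ℂ) * ρ p q = (Bm * NM * Bmᴴ) p q := by
      intro p q
      rw [h4]
      simp
    ext p q
    rw [Matrix.sum_apply]
    have hval : ∀ j : Fin 4, ((μ j : ℂ) •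
        ((Uo (fun k => V k j) ⊗ₖ (1 : Matrix (Fin 2) (Fin 2) ℂ)) * outer (maxEnt 2) *
          (Uo (fun k => V k j) ⊗ₖ (1 : Matrix (Fin 2) (Fin 2) ℂ))ᴴ)) p q
        = (μ j : ℂ) * (2⁻¹ * ((∑ k, Bm p k * (V k j : ℂ)) *
            star (∑ l, Bm q l * (V l j : ℂ)))) := by
      intro j
      rw [Matrix.smul_apply, kron_outer]
      rw [Uo_mul_sum, Uo_mul_sum]
      simp
    simp only [hval]
    have hNs : ∀ k l, NM k l
        = 2 * ((∑ j, V k j * μ j * V l j : ℝ) : ℂ) := by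
      intro k l
      rw [← hNM, hMrC k l, hSpec k l]
    have hexp := hrecon p q
    simp only [Matrix.mul_apply, Fin.sum_univ_four, Matrix.conjTranspose_apply] at hexp
    rw [hNs, hNs, hNs, hNs, hNs, hNs, hNs, hNs, hNs, hNs, hNs, hNs, hNs, hNs, hNs, hNs] at hexp
    simp only [Fin.sum_univ_four] at *
    push_cast at hexp ⊢
    simp only [Complex.star_def, map_add, _root_.map_mul, Complex.conj_ofReal] at hexp ⊢
    linear_combination (4:ℂ)⁻¹ * hexp
end
end

section
/- Let ψ be a unit vector in ℂ^d ⊗ ℂ^d with matrixification ψ̃. Then the infimum over all d×d unitaries U of ‖ |ψ⟩⟨ψ| − (U⊗𝟙)|I⟩⟨I|(U⊗𝟙)† ‖_F² equals 2 − 2‖ψ̃‖₁²/d, where ‖ψ̃‖₁ is the trace norm (the sum of the singular values) of ψ̃. -/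
open scoped BigOperators Matrix Kronecker ComplexOrder

noncomputable section

/-- Frobenius (Hilbert-Schmidt) norm of a complex matrix. -/
def frobNorm {m n : Type*} [Fintype m] [Fintype n] (X : Matrix m n ℂ) : ℝ :=
  Real.sqrt (∑ i, ∑ j, Complex.normSq (X i j))

/-- Matrixification of a bipartite vector. -/
def matrixify (d : ℕ) (ψ : Fin d × Fin d → ℂ) : Matrix (Fin d) (Fin d) ℂ :=
  Matrix.of fun i j => ψ (i, j)

/-- The trace norm: the sum of the singular values, i.e. of the square roots of the
eigenvalues of X†X. -/
def traceNorm {n : ℕ} (X : Matrix (Fin n) (Fin n) ℂ) : ℝ :=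
  ∑ i, Real.sqrt ((Matrix.posSemidef_conjTranspose_mul_self X).1.eigenvalues i)

lemma exists_svd (d : ℕ) (A : Matrix (Fin d) (Fin d) ℂ) :
    ∃ W ∈ Matrix.unitaryGroup (Fin d) ℂ, ∃ V ∈ Matrix.unitaryGroup (Fin d) ℂ,
      A = W * Matrix.diagonal (fun i =>
          ((Real.sqrt ((Matrix.posSemidef_conjTranspose_mul_self A).1.eigenvalues i) : ℝ) : ℂ))
        * Vᴴ := by
  have hPSD := Matrix.posSemidef_conjTranspose_mul_self A
  set hH : (Aᴴ * A).IsHermitian := hPSD.1 with hHdef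
  set μ : Fin d → ℝ := hH.eigenvalues with hμ
  have hμ0 : ∀ i, 0 ≤ μ i := fun i => hPSD.eigenvalues_nonneg i
  set σ : Fin d → ℝ := fun i => Real.sqrt (μ i) with hσ
  set Vm : Matrix (Fin d) (Fin d) ℂ := (Matrix.IsHermitian.eigenvectorUnitary hH : Matrix (Fin d) (Fin d) ℂ) with hVm
  have hVmem : Vm ∈ Matrix.unitaryGroup (Fin d) ℂ := (Matrix.IsHermitian.eigenvectorUnitary hH).2
  have hVV : Vmᴴ * Vm = 1 := Matrix.mem_unitaryGroup_iff'.mp hVmem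
  have hVV' : Vm * Vmᴴ = 1 := Matrix.mem_unitaryGroup_iff.mp hVmem
  set B : Matrix (Fin d) (Fin d) ℂ := A * Vm with hB
  have hBB : Bᴴ * B = Matrix.diagonal (fun i => (μ i : ℂ)) := by
    have hspec := hH.spectral_theorem
    rw [Unitary.conjStarAlgAut_apply, Matrix.star_eq_conjTranspose, ← hVm, ← hμ] at hspec
    calc Bᴴ * B = Vmᴴ * (Aᴴ * A) * Vm := by
          simp [hB, Matrix.conjTranspose_mul, Matrix.mul_assoc]
      _ = Vmᴴ * (Vm * Matrix.diagonal (RCLike.ofReal ∘ μ) * Vmᴴ) * Vm := by rw [← hspec]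
      _ = Matrix.diagonal (fun i => (μ i : ℂ)) := by
          simp only [Matrix.mul_assoc]
          rw [hVV, Matrix.mul_one, ← Matrix.mul_assoc, hVV, Matrix.one_mul]
          simp [Function.comp]
  -- columns of B
  set bc : Fin d → EuclideanSpace ℂ (Fin d) := fun j => WithLp.toLp 2 (fun i => B i j) with hbc
  have hinner : ∀ i j, (inner ℂ (bc i) (bc j) : ℂ) = if i = j then (μ i : ℂ) else 0 := by
    intro i j
    have : (Bᴴ * B) i j = if i = j then (μ i : ℂ) else 0 := by
      rw [hBB]; by_cases h : i = j <;> simp [Matrix.diagonal, h]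
    rw [← this]
    simp [Matrix.mul_apply, PiLp.inner_apply, RCLike.inner_apply, Matrix.conjTranspose_apply,
      hbc, mul_comm]
  have hσ0 : ∀ i, 0 ≤ σ i := fun i => Real.sqrt_nonneg _
  have hσsq : ∀ i, σ i * σ i = μ i := fun i => Real.mul_self_sqrt (hμ0 i)
  -- normalized columns on the support
  set v : Fin d → EuclideanSpace ℂ (Fin d) := fun j => ((σ j : ℂ))⁻¹ • bc j with hv
  set s : Set (Fin d) := {j | μ j ≠ 0} with hs
  have hON : Orthonormal ℂ (s.restrict v) := by
    rw [orthonormal_iff_ite]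
    rintro ⟨i, hi⟩ ⟨j, hj⟩
    simp only [Set.restrict_apply, Set.restrict, hv, inner_smul_left, inner_smul_right, hinner]
    by_cases h : i = j
    · subst h
      have hσne : (σ i : ℂ) ≠ 0 := by
        simp only [ne_eq, Complex.ofReal_eq_zero]
        exact fun hc => hi (by rw [← hσsq i, hc, mul_zero])
      simp only [if_pos rfl, map_inv₀, Complex.star_def, Complex.conj_ofReal, if_true]
      rw [← hσsq i]
      push_cast
      field_simp
    · have : (⟨i, hi⟩ : s) ≠ ⟨j, hj⟩ := by simpa using h
      simp [h, this]
  have hcard : Module.finrank ℂ (EuclideanSpace ℂ (Fin d)) = Fintype.card (Fin d) := by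
    simp
  obtain ⟨b, hb⟩ := hON.exists_orthonormalBasis_extension_of_card_eq hcard
  set Wm : Matrix (Fin d) (Fin d) ℂ := Matrix.of (fun i j => b j i) with hWm
  have hWmem : Wm ∈ Matrix.unitaryGroup (Fin d) ℂ := by
    rw [Matrix.mem_unitaryGroup_iff']
    ext i j
    have := (orthonormal_iff_ite.mp b.orthonormal) i j
    simp only [PiLp.inner_apply, RCLike.inner_apply] at this
    simp only [Matrix.mul_apply, Matrix.conjTranspose_apply, hWm, Matrix.of_apply,
      Matrix.star_apply, Complex.star_def]
    rw [show (∑ x, (starRingEnd ℂ) ((b i).ofLp x) * (b j).ofLp x)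
        = ∑ x, (b j).ofLp x * (starRingEnd ℂ) ((b i).ofLp x) from
      Finset.sum_congr rfl fun x _ => mul_comm _ _, this]
    by_cases h : i = j <;> simp [h, Matrix.one_apply]
  refine ⟨Wm, hWmem, Vm, hVmem, ?_⟩
  have hBW : B = Wm * Matrix.diagonal (fun i => (σ i : ℂ)) := by
    ext i j
    rw [Matrix.mul_diagonal]
    simp only [hWm, Matrix.of_apply]
    by_cases h : μ j = 0
    · have hBj0 : B i j = 0 := by
        have h0 : (inner ℂ (bc j) (bc j) : ℂ) = 0 := by rw [hinner]; simp [h]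
        have := inner_self_eq_zero.mp h0
        have : bc j i = 0 := by rw [this]; rfl
        simpa [hbc] using this
      rw [hBj0]
      have : σ j = 0 := by rw [hσ]; simp [h]
      rw [this]
      simp
    · have hbj := hb j h
      have hσne : (σ j : ℂ) ≠ 0 := by
        simp only [ne_eq, Complex.ofReal_eq_zero]
        exact fun hc => h (by rw [← hσsq j, hc, mul_zero])
      have : b j i = ((σ j : ℂ))⁻¹ * B i j := by
        rw [hbj]; simp [hv, hbc]
      rw [this]
      field_simp
  calc A = A * (Vm * Vmᴴ) := by rw [hVV', Matrix.mul_one]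
    _ = B * Vmᴴ := by rw [← Matrix.mul_assoc]
    _ = Wm * Matrix.diagonal (fun i => (σ i : ℂ)) * Vmᴴ := by rw [hBW]

-- diagonal entries of a unitary have modulus ≤ 1
lemma unitary_diag_abs_le (d : ℕ) (M : Matrix (Fin d) (Fin d) ℂ)
    (hM : M ∈ Matrix.unitaryGroup (Fin d) ℂ) (i : Fin d) : ‖M i i‖ ≤ 1 := by
  have h1 : (M * Mᴴ) i i = 1 := by
    have := Matrix.mem_unitaryGroup_iff.mp hM
    rw [Matrix.star_eq_conjTranspose] at this
    rw [this]; simp [Matrix.one_apply]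
  have h2 : ∑ k, Complex.normSq (M i k) = 1 := by
    have := h1
    simp only [Matrix.mul_apply, Matrix.conjTranspose_apply] at this
    have : (∑ k, M i k * star (M i k)) = 1 := this
    have := congrArg Complex.re this
    simpa [Complex.mul_conj, Complex.normSq] using this
  have h3 : Complex.normSq (M i i) ≤ 1 := by
    rw [← h2]
    exact Finset.single_le_sum (f := fun k => Complex.normSq (M i k))
      (fun k _ => Complex.normSq_nonneg _) (Finset.mem_univ i)
  rw [Complex.norm_def, ← Real.sqrt_one]
  exact Real.sqrt_le_sqrt h3

lemma trace_le (d : ℕ) (A U : Matrix (Fin d) (Fin d) ℂ)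
    (hU : U ∈ Matrix.unitaryGroup (Fin d) ℂ) :
    ‖Matrix.trace (Uᴴ * A)‖ ≤
      ∑ i, Real.sqrt ((Matrix.posSemidef_conjTranspose_mul_self A).1.eigenvalues i) := by
  obtain ⟨W, hW, V, hV, hA⟩ := exists_svd d A
  set σ : Fin d → ℝ := fun i =>
    Real.sqrt ((Matrix.posSemidef_conjTranspose_mul_self A).1.eigenvalues i) with hσ
  have hσ0 : ∀ i, 0 ≤ σ i := fun i => Real.sqrt_nonneg _
  set M : Matrix (Fin d) (Fin d) ℂ := Vᴴ * Uᴴ * W with hM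
  have hMmem : M ∈ Matrix.unitaryGroup (Fin d) ℂ := by
    exact mul_mem (mul_mem (Unitary.star_mem hV) (Unitary.star_mem hU)) hW
  have htr : Matrix.trace (Uᴴ * A) = ∑ i, M i i * (σ i : ℂ) := by
    rw [hA, show Uᴴ * (W * Matrix.diagonal (fun i => (σ i : ℂ)) * Vᴴ)
        = (Uᴴ * W * Matrix.diagonal (fun i => (σ i : ℂ))) * Vᴴ by
      simp [Matrix.mul_assoc]]
    rw [Matrix.trace_mul_comm]
    rw [show Vᴴ * (Uᴴ * W * Matrix.diagonal (fun i => (σ i : ℂ)))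
        = M * Matrix.diagonal (fun i => (σ i : ℂ)) by simp [hM, Matrix.mul_assoc]]
    rw [Matrix.trace]
    congr 1
    ext i
    simp [Matrix.mul_diagonal, Matrix.diag_apply]
  rw [htr]
  calc ‖∑ i, M i i * (σ i : ℂ)‖ ≤ ∑ i, ‖M i i * (σ i : ℂ)‖ := by
        exact norm_sum_le _ _
    _ ≤ ∑ i, σ i := by
        apply Finset.sum_le_sum
        intro i _
        rw [norm_mul]
        have h1 : ‖((σ i : ℂ))‖ = σ i := by
          exact Complex.norm_of_nonneg (hσ0 i)
        rw [h1]
        calc ‖M i i‖ * σ i ≤ 1 * σ i :=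
              mul_le_mul_of_nonneg_right (unitary_diag_abs_le d M hMmem i) (hσ0 i)
          _ = σ i := one_mul _

lemma trace_attain (d : ℕ) (A : Matrix (Fin d) (Fin d) ℂ) :
    ∃ U ∈ Matrix.unitaryGroup (Fin d) ℂ, Matrix.trace (Uᴴ * A) =
      ((∑ i, Real.sqrt ((Matrix.posSemidef_conjTranspose_mul_self A).1.eigenvalues i) : ℝ) : ℂ) := by
  obtain ⟨W, hW, V, hV, hA⟩ := exists_svd d A
  set σ : Fin d → ℝ := fun i =>
    Real.sqrt ((Matrix.posSemidef_conjTranspose_mul_self A).1.eigenvalues i) with hσ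
  refine ⟨W * Vᴴ, mul_mem hW (Unitary.star_mem hV), ?_⟩
  have hWW : Wᴴ * W = 1 := Matrix.mem_unitaryGroup_iff'.mp hW
  have hVV : Vᴴ * V = 1 := Matrix.mem_unitaryGroup_iff'.mp hV
  rw [hA]
  rw [show (W * Vᴴ)ᴴ * (W * Matrix.diagonal (fun i => (σ i : ℂ)) * Vᴴ)
      = V * ((Wᴴ * W) * Matrix.diagonal (fun i => (σ i : ℂ))) * Vᴴ by
    simp [Matrix.conjTranspose_mul, Matrix.mul_assoc]]
  rw [hWW, Matrix.one_mul, ← Matrix.trace_mul_cycle, Matrix.mul_assoc, hVV, Matrix.mul_one]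
  rw [Matrix.trace_diagonal]
  push_cast
  rfl

lemma mul_outer_mul {n : Type*} [Fintype n] (M : Matrix n n ℂ) (x : n → ℂ) :
    M * outer x * Mᴴ = outer (M *ᵥ x) := by
  ext p q
  simp only [Matrix.mul_apply, outer, Matrix.of_apply, Matrix.conjTranspose_apply,
    Matrix.mulVec, dotProduct, star_sum, star_mul', Finset.mul_sum, Finset.sum_mul]
  apply Finset.sum_congr rfl
  intro r _
  apply Finset.sum_congr rfl
  intro s _
  ring

lemma phi_eq (d : ℕ) (U : Matrix (Fin d) (Fin d) ℂ) (p : Fin d × Fin d) :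
    ((U ⊗ₖ (1 : Matrix (Fin d) (Fin d) ℂ)) *ᵥ maxEnt d) p
      = U p.1 p.2 * ((Real.sqrt d : ℝ) : ℂ)⁻¹ := by
  obtain ⟨i, j⟩ := p
  simp only [Matrix.mulVec, dotProduct, maxEnt, Fintype.sum_prod_type,
    Matrix.kroneckerMap_apply, Matrix.one_apply, mul_ite, ite_mul, mul_zero, zero_mul,
    mul_one, one_mul]
  rw [Finset.sum_comm]
  simp [Finset.sum_ite_eq, Finset.sum_ite_eq']

lemma frob_outer_sub {n : Type*} [Fintype n] (x y : n → ℂ) :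
    (frobNorm (outer x - outer y)) ^ 2 =
      (∑ p, Complex.normSq (x p)) ^ 2 + (∑ p, Complex.normSq (y p)) ^ 2
        - 2 * Complex.normSq (∑ p, x p * star (y p)) := by
  have h1 : (frobNorm (outer x - outer y)) ^ 2
      = ∑ p, ∑ q, Complex.normSq ((outer x - outer y) p q) := by
    rw [frobNorm, Real.sq_sqrt]
    exact Finset.sum_nonneg fun p _ => Finset.sum_nonneg fun q _ => Complex.normSq_nonneg _
  rw [h1]
  have h2 : ∀ p q : n, Complex.normSq ((outer x - outer y) p q)
      = Complex.normSq (x p) * Complex.normSq (x q)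
        + Complex.normSq (y p) * Complex.normSq (y q)
        - 2 * ((x p * star (y p)) * star (x q * star (y q))).re := by
    intro p q
    simp only [Matrix.sub_apply, outer, Matrix.of_apply, Complex.normSq_sub, Complex.star_def,
      Complex.normSq_mul, Complex.normSq_conj, map_mul, Complex.conj_conj]
    congr 2
    ring_nf
  calc ∑ p, ∑ q, Complex.normSq ((outer x - outer y) p q)
      = ∑ p, ∑ q, (Complex.normSq (x p) * Complex.normSq (x q)
          + Complex.normSq (y p) * Complex.normSq (y q)
          - 2 * ((x p * star (y p)) * star (x q * star (y q))).re) := by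
        exact Finset.sum_congr rfl fun p _ => Finset.sum_congr rfl fun q _ => h2 p q
    _ = (∑ p, ∑ q, Complex.normSq (x p) * Complex.normSq (x q))
          + (∑ p, ∑ q, Complex.normSq (y p) * Complex.normSq (y q))
          - 2 * ∑ p, ∑ q, ((x p * star (y p)) * star (x q * star (y q))).re := by
        have key : ∀ (f g c : n → n → ℝ), ∑ p, ∑ q, (f p q + g p q - 2 * c p q)
            = (∑ p, ∑ q, f p q) + (∑ p, ∑ q, g p q) - 2 * ∑ p, ∑ q, c p q := by
          intro f g c
          simp only [Finset.sum_add_distrib, Finset.sum_sub_distrib, Finset.mul_sum]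
        exact key _ _ _
    _ = (∑ p, Complex.normSq (x p)) ^ 2 + (∑ p, Complex.normSq (y p)) ^ 2
          - 2 * Complex.normSq (∑ p, x p * star (y p)) := by
        congr 1
        · congr 1
          · rw [sq, Finset.sum_mul_sum]
          · rw [sq, Finset.sum_mul_sum]
        · congr 1
          set z : n → ℂ := fun p => x p * star (y p) with hz
          calc ∑ p, ∑ q, (z p * star (z q)).re
              = ((∑ p, z p) * star (∑ q, z q)).re := by
                rw [star_sum, Finset.sum_mul, Complex.re_sum]
                apply Finset.sum_congr rfl
                intro p _
                rw [Finset.mul_sum, Complex.re_sum]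
            _ = Complex.normSq (∑ p, z p) := by
                rw [Complex.star_def, Complex.mul_conj, Complex.ofReal_re]

lemma unitary_sum_normSq (d : ℕ) (U : Matrix (Fin d) (Fin d) ℂ)
    (hU : U ∈ Matrix.unitaryGroup (Fin d) ℂ) :
    ∑ i, ∑ j, Complex.normSq (U i j) = d := by
  have h := Matrix.mem_unitaryGroup_iff'.mp hU
  rw [Matrix.star_eq_conjTranspose] at h
  have htr : Matrix.trace (Uᴴ * U) = (d : ℂ) := by
    rw [h, Matrix.trace_one]
    simp
  have h2 : Matrix.trace (Uᴴ * U) = ((∑ j, ∑ i, Complex.normSq (U i j) : ℝ) : ℂ) := by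
    rw [Matrix.trace]
    push_cast
    apply Finset.sum_congr rfl
    intro j _
    rw [Matrix.diag_apply, Matrix.mul_apply]
    apply Finset.sum_congr rfl
    intro i _
    rw [Matrix.conjTranspose_apply, Complex.star_def, mul_comm, Complex.mul_conj]
  rw [h2] at htr
  have h3 : ((∑ j, ∑ i, Complex.normSq (U i j) : ℝ) : ℂ) = (((d : ℝ)) : ℂ) := by
    rw [htr]; norm_cast
  have h4 := Complex.ofReal_injective h3
  rw [Finset.sum_comm] at h4
  exact h4

/-- The key pointwise formula. -/
lemma elt_formula (d : ℕ) (hd : 0 < d) (ψ : Fin d × Fin d → ℂ)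
    (hψ : ∑ q, Complex.normSq (ψ q) = 1)
    (U : Matrix (Fin d) (Fin d) ℂ) (hU : U ∈ Matrix.unitaryGroup (Fin d) ℂ) :
    (frobNorm (outer ψ -
        (U ⊗ₖ (1 : Matrix (Fin d) (Fin d) ℂ)) * outer (maxEnt d) *
          (U ⊗ₖ (1 : Matrix (Fin d) (Fin d) ℂ))ᴴ)) ^ 2
      = 2 - 2 * Complex.normSq (Matrix.trace (Uᴴ * matrixify d ψ)) / d := by
  rw [mul_outer_mul]
  set φ : Fin d × Fin d → ℂ := (U ⊗ₖ (1 : Matrix (Fin d) (Fin d) ℂ)) *ᵥ maxEnt d with hφ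
  rw [frob_outer_sub, hψ]
  have hdR : (0 : ℝ) < (d : ℝ) := by exact_mod_cast hd
  have hφval : ∀ p, φ p = U p.1 p.2 * ((Real.sqrt d : ℝ) : ℂ)⁻¹ := fun p => phi_eq d U p
  have hsqd : (Real.sqrt d) * (Real.sqrt d) = (d : ℝ) :=
    Real.mul_self_sqrt (by positivity)
  have hφnorm : ∑ p, Complex.normSq (φ p) = 1 := by
    have : ∀ p : Fin d × Fin d, Complex.normSq (φ p)
        = Complex.normSq (U p.1 p.2) / d := by
      intro p
      rw [hφval p, Complex.normSq_mul, Complex.normSq_inv, Complex.normSq_ofReal, hsqd]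
      rfl
    rw [Finset.sum_congr rfl (fun p _ => this p)]
    rw [← Finset.sum_div]
    rw [Fintype.sum_prod_type]
    rw [unitary_sum_normSq d U hU]
    field_simp
  rw [hφnorm]
  have hsum : ∑ p, ψ p * star (φ p)
      = Matrix.trace (Uᴴ * matrixify d ψ) * ((Real.sqrt d : ℝ) : ℂ)⁻¹ := by
    have htr : Matrix.trace (Uᴴ * matrixify d ψ)
        = ∑ p : Fin d × Fin d, ψ p * star (U p.1 p.2) := by
      rw [Matrix.trace, Fintype.sum_prod_type]
      rw [Finset.sum_comm]
      apply Finset.sum_congr rfl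
      intro j _
      rw [Matrix.diag_apply, Matrix.mul_apply]
      apply Finset.sum_congr rfl
      intro i _
      rw [Matrix.conjTranspose_apply]
      simp [matrixify, mul_comm]
    rw [htr, Finset.sum_mul]
    apply Finset.sum_congr rfl
    intro p _
    rw [hφval p]
    rw [star_mul']
    have : star (((Real.sqrt d : ℝ) : ℂ)⁻¹) = ((Real.sqrt d : ℝ) : ℂ)⁻¹ := by
      rw [Complex.star_def, map_inv₀, Complex.conj_ofReal]
    rw [this]
    ring
  rw [hsum, Complex.normSq_mul, Complex.normSq_inv, Complex.normSq_ofReal, hsqd]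
  have : (2 : ℝ) * (Complex.normSq (Matrix.trace (Uᴴ * matrixify d ψ)) * ((d : ℝ))⁻¹)
      = 2 * Complex.normSq (Matrix.trace (Uᴴ * matrixify d ψ)) / d := by
    field_simp
  rw [this]
  norm_num

/-- The squared Frobenius distance from a pure state to the set of maximally entangled
pure states equals 2 − 2‖ψ̃‖₁²/d. -/
theorem inf_sq_dist_to_maximally_entangled
    (d : ℕ) (hd : 0 < d) (ψ : Fin d × Fin d → ℂ)
    (hψ : ∑ q, Complex.normSq (ψ q) = 1) :
    sInf { x : ℝ | ∃ U ∈ Matrix.unitaryGroup (Fin d) ℂ,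
        x = (frobNorm (outer ψ -
          (U ⊗ₖ (1 : Matrix (Fin d) (Fin d) ℂ)) * outer (maxEnt d) *
            (U ⊗ₖ (1 : Matrix (Fin d) (Fin d) ℂ))ᴴ)) ^ 2 }
      = 2 - 2 * (traceNorm (matrixify d ψ)) ^ 2 / d := by
  set A : Matrix (Fin d) (Fin d) ℂ := matrixify d ψ with hA
  set t : ℝ := traceNorm A with ht
  have ht0 : 0 ≤ t := Finset.sum_nonneg fun i _ => Real.sqrt_nonneg _
  have hdR : (0 : ℝ) < (d : ℝ) := by exact_mod_cast hd
  set S := { x : ℝ | ∃ U ∈ Matrix.unitaryGroup (Fin d) ℂ,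
        x = (frobNorm (outer ψ -
          (U ⊗ₖ (1 : Matrix (Fin d) (Fin d) ℂ)) * outer (maxEnt d) *
            (U ⊗ₖ (1 : Matrix (Fin d) (Fin d) ℂ))ᴴ)) ^ 2 } with hS
  have hlb : ∀ x ∈ S, 2 - 2 * t ^ 2 / d ≤ x := by
    rintro x ⟨U, hU, rfl⟩
    rw [elt_formula d hd ψ hψ U hU]
    have habs : ‖Matrix.trace (Uᴴ * A)‖ ≤ t := trace_le d A U hU
    have hns : Complex.normSq (Matrix.trace (Uᴴ * A)) ≤ t ^ 2 := by
      rw [← Complex.sq_norm]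
      exact pow_le_pow_left₀ (norm_nonneg _) habs 2
    gcongr
  have hmem : (2 - 2 * t ^ 2 / d) ∈ S := by
    obtain ⟨U, hU, hUeq⟩ := trace_attain d A
    refine ⟨U, hU, ?_⟩
    rw [elt_formula d hd ψ hψ U hU, hUeq, Complex.normSq_ofReal]
    have hteq : (∑ i, Real.sqrt
        ((Matrix.posSemidef_conjTranspose_mul_self A).1.eigenvalues i)) = t := rfl
    rw [hteq, ← sq]
  exact le_antisymm (csInf_le ⟨2 - 2 * t ^ 2 / d, hlb⟩ hmem) (le_csInf ⟨_, hmem⟩ hlb)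
end
end

section
/- Let 𝒞 = { σ : σ a positive semidefinite matrix on ℂ^d ⊗ ℂ^d with Tr₁σ = 𝟙/d } (the set of state representatives of completely positive trace-preserving maps on ℂ^d). If σ is an extreme point of the convex set 𝒞, then rank σ ≤ d. -/
open scoped BigOperators Matrix ComplexOrder

noncomputable section

/-- The set of Choi matrices of completely positive trace-preserving maps on ℂ^d. -/
def CPTSet (d : ℕ) : Set (Matrix (Fin d × Fin d) (Fin d × Fin d) ℂ) :=
  { σ | σ.PosSemidef ∧ ptrace1 d σ = (d : ℂ)⁻¹ • 1 }

namespace CPTaux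

open Matrix

/-- `ptrace1` as a `ℂ`-linear map. -/
def ptraceLin (d : ℕ) : Matrix (Fin d × Fin d) (Fin d × Fin d) ℂ →ₗ[ℂ] Matrix (Fin d) (Fin d) ℂ where
  toFun := ptrace1 d
  map_add' X Y := by ext j l; simp [ptrace1, Finset.sum_add_distrib]
  map_smul' c X := by ext j l; simp [ptrace1, Finset.mul_sum]

lemma ptrace1_conjTranspose {d : ℕ} (X : Matrix (Fin d × Fin d) (Fin d × Fin d) ℂ) :
    ptrace1 d Xᴴ = (ptrace1 d X)ᴴ := by
  ext j l
  simp [ptrace1, Matrix.conjTranspose_apply]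

/-- Conjugation `A ↦ P * A * Q` as a linear map. -/
def conjLin {m : Type*} [Fintype m] (P Q : Matrix m m ℂ) :
    Matrix m m ℂ →ₗ[ℂ] Matrix m m ℂ where
  toFun A := P * A * Q
  map_add' A B := by simp only [Matrix.mul_add, Matrix.add_mul]
  map_smul' c A := by simp only [Matrix.mul_smul, Matrix.smul_mul, RingHom.id_apply]

/-- Embedding of functions on the support into matrices. -/
def suppInj {m : Type*} [Fintype m] [DecidableEq m] (p : m → Prop) [DecidablePred p] :
    (({i // p i} × {i // p i}) → ℂ) →ₗ[ℂ] Matrix m m ℂ where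
  toFun f := Matrix.of fun i j =>
    if hi : p i then if hj : p j then f (⟨i, hi⟩, ⟨j, hj⟩) else 0 else 0
  map_add' f g := by ext i j; dsimp; split_ifs <;> simp
  map_smul' c f := by ext i j; dsimp; split_ifs <;> simp

lemma exists_one_add_smul_posSemidef {m : Type*} [Fintype m] [DecidableEq m]
    (M : Matrix m m ℂ) (hM : M.IsHermitian) :
    ∃ t : ℝ, 0 < t ∧ (1 + (t : ℂ) • M).PosSemidef ∧ (1 - (t : ℂ) • M).PosSemidef := by
  set μ := hM.eigenvalues with hμ
  set c : ℝ := (∑ i, |μ i|) + 1 with hc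
  have hsum : 0 ≤ ∑ i, |μ i| := Finset.sum_nonneg fun i _ => abs_nonneg _
  have hcpos : 0 < c := by positivity
  have hbound : ∀ i, |μ i| ≤ c - 1 := by
    intro i
    have := Finset.single_le_sum (f := fun j => |μ j|) (fun j _ => abs_nonneg _)
      (Finset.mem_univ i)
    simpa [hc] using this
  have key : ∀ s : ℝ, (∀ i, 0 ≤ 1 + s * μ i) → (1 + (s : ℂ) • M).PosSemidef := by
    intro s hs
    set U : Matrix m m ℂ := (hM.eigenvectorUnitary : Matrix m m ℂ) with hU
    have hU1 : U * Uᴴ = 1 := by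
      rw [← Matrix.star_eq_conjTranspose]
      exact Matrix.mem_unitaryGroup_iff.mp (hM.eigenvectorUnitary).2
    have hdiag : Matrix.diagonal (fun i => ((1 + s * μ i : ℝ) : ℂ))
        = 1 + (s : ℂ) • Matrix.diagonal (RCLike.ofReal ∘ μ) := by
      ext i j
      by_cases h : i = j <;>
        simp [h, Matrix.diagonal_apply, Matrix.one_apply] <;> push_cast <;> ring
    have hrw : 1 + (s : ℂ) • M = U * Matrix.diagonal (fun i => ((1 + s * μ i : ℝ) : ℂ)) * Uᴴ := by
      rw [hdiag, Matrix.mul_add, Matrix.add_mul, Matrix.mul_one, hU1,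
        Matrix.mul_smul, Matrix.smul_mul]
      congr 1
      rw [hM.spectral_theorem, Unitary.conjStarAlgAut_apply, ← hU, Matrix.star_eq_conjTranspose]
    rw [hrw]
    exact (Matrix.posSemidef_diagonal_iff.mpr fun i =>
      Complex.zero_le_real.mpr (hs i)).mul_mul_conjTranspose_same U
  refine ⟨c⁻¹, by positivity, key c⁻¹ ?_, ?_⟩
  · intro i
    have h1 := hbound i
    have h2 := neg_abs_le (μ i)
    have h3 : c⁻¹ * c = 1 := inv_mul_cancel₀ hcpos.ne'
    have h4 : (0:ℝ) < c⁻¹ := by positivity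
    nlinarith
  · have heq : (1 : Matrix m m ℂ) - ((c⁻¹ : ℝ) : ℂ) • M = 1 + ((-c⁻¹ : ℝ) : ℂ) • M := by
      rw [Complex.ofReal_neg, neg_smul, ← sub_eq_add_neg]
    rw [heq]
    refine key _ ?_
    intro i
    have h1 := hbound i
    have h2 := le_abs_self (μ i)
    have h3 : c⁻¹ * c = 1 := inv_mul_cancel₀ hcpos.ne'
    have h4 : (0:ℝ) < c⁻¹ := by positivity
    nlinarith

end CPTaux

set_option maxHeartbeats 2000000 in
open Matrix in
/-- Extreme points of the set of CPT Choi matrices have rank at most d. -/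
theorem rank_extreme_CPT_le
    (d : ℕ) (hd : 0 < d)
    (σ : Matrix (Fin d × Fin d) (Fin d × Fin d) ℂ)
    (hσ : σ ∈ Set.extremePoints ℝ (CPTSet d)) :
    σ.rank ≤ d := by
  by_contra hrank
  push_neg at hrank
  obtain ⟨⟨hPSD, hTr⟩, hext⟩ := hσ
  have hHerm : σ.IsHermitian := hPSD.1
  set lam := hHerm.eigenvalues with hlam
  set U : Matrix (Fin d × Fin d) (Fin d × Fin d) ℂ :=
    (hHerm.eigenvectorUnitary : Matrix (Fin d × Fin d) (Fin d × Fin d) ℂ) with hUdef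
  have hU1 : U * star U = 1 := Matrix.mem_unitaryGroup_iff.mp (hHerm.eigenvectorUnitary).2
  have hU1' : star U * U = 1 := Matrix.mem_unitaryGroup_iff'.mp (hHerm.eigenvectorUnitary).2
  set E : Matrix (Fin d × Fin d) (Fin d × Fin d) ℂ :=
    Matrix.diagonal (fun i => (Real.sqrt (lam i) : ℂ)) with hEdef
  have hEstar : star E = E := by
    rw [hEdef, Matrix.star_eq_conjTranspose, Matrix.diagonal_conjTranspose]
    simp [Pi.star_def, Complex.conj_ofReal]
  have hEE : E * E = Matrix.diagonal (RCLike.ofReal ∘ lam) := by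
    rw [hEdef, Matrix.diagonal_mul_diagonal]
    refine congrArg Matrix.diagonal (funext fun i => ?_)
    rw [← Complex.ofReal_mul, Real.mul_self_sqrt (hPSD.eigenvalues_nonneg i)]
    rfl
  set S : Matrix (Fin d × Fin d) (Fin d × Fin d) ℂ := U * E with hSdef
  have hstarS : star S = E * star U := by
    rw [hSdef, StarMul.star_mul, hEstar]
  have hspec : σ = S * star S := by
    rw [hstarS, hSdef, Matrix.mul_assoc, ← Matrix.mul_assoc E E, hEE, ← Matrix.mul_assoc]
    exact hHerm.spectral_theorem
  -- the linear maps
  set Ψ : Matrix (Fin d × Fin d) (Fin d × Fin d) ℂ →ₗ[ℂ] Matrix (Fin d) (Fin d) ℂ :=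
    (CPTaux.ptraceLin d).comp (CPTaux.conjLin S (star S)) with hΨdef
  have hΨapply : ∀ X, Ψ X = ptrace1 d (S * X * star S) := fun X => rfl
  classical
  set p : Fin d × Fin d → Prop := fun i => lam i ≠ 0 with hp
  set F := Ψ.comp (CPTaux.suppInj p) with hFdef
  -- dimension count
  have hcard : Fintype.card {i // p i} = σ.rank := by
    rw [hHerm.rank_eq_card_non_zero_eigs]
  have hnotinj : ¬ Function.Injective F := by
    intro hinj
    have hle := LinearMap.finrank_le_finrank_of_injective hinj
    rw [Module.finrank_pi, Module.finrank_matrix, Fintype.card_prod, hcard,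
      Fintype.card_fin, Module.finrank_self, mul_one] at hle
    nlinarith
  obtain ⟨a, b, hab, hne⟩ := Function.not_injective_iff.mp hnotinj
  set f := a - b with hf
  have hfne : f ≠ 0 := sub_ne_zero.mpr hne
  have hFf : F f = 0 := by rw [hf, map_sub, hab, sub_self]
  set M : Matrix (Fin d × Fin d) (Fin d × Fin d) ℂ := CPTaux.suppInj p f with hMdef
  have hMsupp : ∀ i j, (lam i = 0 ∨ lam j = 0) → M i j = 0 := by
    intro i j hij
    rw [hMdef]
    show (Matrix.of fun i j => if hi : p i then if hj : p j then f (⟨i, hi⟩, ⟨j, hj⟩) else 0 else 0) i j = 0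
    rcases hij with h | h
    · simp [hp, h]
    · by_cases hi : p i <;> simp [hp, hi, h]
  have hMne : M ≠ 0 := by
    obtain ⟨⟨⟨i0, hi0⟩, ⟨j0, hj0⟩⟩, ha⟩ := Function.ne_iff.mp hfne
    intro h0
    apply ha
    have hM0 : M i0 j0 = f (⟨i0, hi0⟩, ⟨j0, hj0⟩) := by
      show (if hi : p i0 then if hj : p j0 then f (⟨i0, hi⟩, ⟨j0, hj⟩) else 0 else 0) = _
      rw [dif_pos hi0, dif_pos hj0]
    rw [h0] at hM0
    simpa using hM0.symm
  have hΨM : Ψ M = 0 := hFf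
  -- conjugate-transpose compatibility of Ψ
  have hΨconj : ∀ X, Ψ Xᴴ = (Ψ X)ᴴ := by
    intro X
    rw [hΨapply, hΨapply, ← CPTaux.ptrace1_conjTranspose]
    congr 1
    simp [Matrix.star_eq_conjTranspose, Matrix.conjTranspose_mul, Matrix.mul_assoc]
  -- produce a Hermitian perturbation direction
  obtain ⟨Mh, hMhne, hMhherm, hMhΨ, hMhsupp⟩ :
      ∃ Mh : Matrix (Fin d × Fin d) (Fin d × Fin d) ℂ, Mh ≠ 0 ∧ Mh.IsHermitian ∧ Ψ Mh = 0 ∧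
        ∀ i j, (lam i = 0 ∨ lam j = 0) → Mh i j = 0 := by
    have hMHsupp : ∀ i j, (lam i = 0 ∨ lam j = 0) → Mᴴ i j = 0 := by
      intro i j hij
      rw [Matrix.conjTranspose_apply, hMsupp j i hij.symm, star_zero]
    have hΨMH : Ψ Mᴴ = 0 := by rw [hΨconj, hΨM, Matrix.conjTranspose_zero]
    by_cases h1 : M + Mᴴ = 0
    · refine ⟨Complex.I • (M - Mᴴ), ?_, ?_, ?_, ?_⟩
      · intro h0
        have h2 : M - Mᴴ = 0 := by
          rcases smul_eq_zero.mp h0 with h | h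
          · exact absurd h Complex.I_ne_zero
          · exact h
        apply hMne
        have hMM : M + M = 0 := by
          have : (M + Mᴴ) + (M - Mᴴ) = M + M := by abel
          rw [h1, h2, add_zero] at this
          exact this.symm
        have h2M : (2 : ℂ) • M = 0 := by rw [two_smul]; exact hMM
        rcases smul_eq_zero.mp h2M with h | h
        · exact absurd h two_ne_zero
        · exact h
      · show (Complex.I • (M - Mᴴ))ᴴ = _
        rw [Matrix.conjTranspose_smul, Matrix.conjTranspose_sub,
          Matrix.conjTranspose_conjTranspose]
        simp [Complex.conj_I, neg_smul, ← smul_neg, neg_sub]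
      · rw [_root_.map_smul, map_sub, hΨM, hΨMH, sub_zero, smul_zero]
      · intro i j hij
        rw [Matrix.smul_apply, Matrix.sub_apply, hMsupp i j hij, hMHsupp i j hij]
        simp
    · refine ⟨M + Mᴴ, h1, ?_, ?_, ?_⟩
      · show (M + Mᴴ)ᴴ = _
        rw [Matrix.conjTranspose_add, Matrix.conjTranspose_conjTranspose, add_comm]
      · rw [map_add, hΨM, hΨMH, add_zero]
      · intro i j hij
        rw [Matrix.add_apply, hMsupp i j hij, hMHsupp i j hij, add_zero]
  -- scale it so that 1 ± N is PSD
  obtain ⟨t, ht, hpos1, hpos2⟩ := CPTaux.exists_one_add_smul_posSemidef Mh hMhherm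
  set N := (t : ℂ) • Mh with hNdef
  have hNne : N ≠ 0 := by
    rw [hNdef]
    simp [smul_eq_zero, Complex.ofReal_ne_zero, ht.ne', hMhne]
  have hΨN : Ψ N = 0 := by rw [hNdef, _root_.map_smul, hMhΨ, smul_zero]
  have hNsupp : ∀ i j, (lam i = 0 ∨ lam j = 0) → N i j = 0 := fun i j hij => by
    rw [hNdef]
    simp [Matrix.smul_apply, hMhsupp i j hij]
  set H := S * N * star S with hHdef
  have hHtr : ptrace1 d H = 0 := by rw [← hΨapply]; exact hΨN
  have hplusmat : σ + H = S * (1 + N) * Sᴴ := by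
    rw [← Matrix.star_eq_conjTranspose, Matrix.mul_add, Matrix.add_mul, Matrix.mul_one, ← hspec,
      hHdef]
  have hminusmat : σ - H = S * (1 - N) * Sᴴ := by
    rw [← Matrix.star_eq_conjTranspose, Matrix.mul_sub, Matrix.sub_mul, Matrix.mul_one, ← hspec,
      hHdef]
  have hplus : (σ + H).PosSemidef := by
    rw [hplusmat]; exact hpos1.mul_mul_conjTranspose_same S
  have hminus : (σ - H).PosSemidef := by
    rw [hminusmat]; exact hpos2.mul_mul_conjTranspose_same S
  have htrplus : ptrace1 d (σ + H) = (d : ℂ)⁻¹ • 1 := by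
    rw [show ptrace1 d (σ + H) = ptrace1 d σ + ptrace1 d H from (CPTaux.ptraceLin d).map_add σ H,
      hHtr, add_zero, hTr]
  have htrminus : ptrace1 d (σ - H) = (d : ℂ)⁻¹ • 1 := by
    rw [show ptrace1 d (σ - H) = ptrace1 d σ - ptrace1 d H from (CPTaux.ptraceLin d).map_sub σ H,
      hHtr, sub_zero, hTr]
  -- H is nonzero
  have hHne : H ≠ 0 := by
    intro h0
    have key : star U * H * U = E * N * E := by
      rw [hHdef, hstarS, hSdef]
      calc star U * (U * E * N * (E * star U)) * U
          = (star U * U) * (E * N * E) * (star U * U) := by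
            simp only [Matrix.mul_assoc]
        _ = E * N * E := by rw [hU1']; simp
    rw [h0] at key
    have hENE : E * N * E = 0 := by simpa using key.symm
    obtain ⟨i, j, hNij⟩ : ∃ i j, N i j ≠ 0 := by
      by_contra h
      push_neg at h
      exact hNne (by ext i j; simpa using h i j)
    have hi : lam i ≠ 0 := fun h => hNij (hNsupp i j (Or.inl h))
    have hj : lam j ≠ 0 := fun h => hNij (hNsupp i j (Or.inr h))
    have hentry : (E * N * E) i j = (Real.sqrt (lam i) : ℂ) * N i j * (Real.sqrt (lam j) : ℂ) := by
      rw [hEdef, Matrix.mul_diagonal, Matrix.diagonal_mul]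
    rw [hENE, Matrix.zero_apply] at hentry
    have hsi : ((Real.sqrt (lam i) : ℝ) : ℂ) ≠ 0 :=
      Complex.ofReal_ne_zero.mpr
        (Real.sqrt_pos.mpr ((hPSD.eigenvalues_nonneg i).lt_of_ne' hi)).ne'
    have hsj : ((Real.sqrt (lam j) : ℝ) : ℂ) ≠ 0 :=
      Complex.ofReal_ne_zero.mpr
        (Real.sqrt_pos.mpr ((hPSD.eigenvalues_nonneg j).lt_of_ne' hj)).ne'
    exact (mul_ne_zero (mul_ne_zero hsi hNij) hsj) hentry.symm
  -- contradiction with extremality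
  have hopen : σ ∈ openSegment ℝ (σ + H) (σ - H) :=
    ⟨1/2, 1/2, by norm_num, by norm_num, by norm_num, by module⟩
  have hfin := hext (x₁ := σ + H) ⟨hplus, htrplus⟩ (x₂ := σ - H) ⟨hminus, htrminus⟩ hopen
  apply hHne
  have hH0 : H = (σ + H) - σ := by abel
  rw [hfin] at hH0
  simpa using hH0
end
end

section
/- Let A₁ and A₂ be 2×2 complex matrices satisfying the double stochasticity constraints A₁A₁† + A₂A₂† = 𝟙 and A₁†A₁ + A₂†A₂ = 𝟙. Then the four 4×4 block-diagonal matrices { A_k†A_l ⊕ A_lA_k† : k, l ∈ {1,2} } are linearly dependent over ℂ. (Consequently, by the Landau–Streater extremality criterion, there are no rank-2 extremal doubly stochastic completely positive qubit maps.) -/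
open scoped BigOperators Matrix

lemma cent_aux (x00 x01 x10 x11 y00 y01 y10 y11 : ℂ)
    (e00 : x00*y00 + x01*y10 = y00*x00 + y01*x10)
    (e01 : x00*y01 + x01*y11 = y00*x01 + y01*x11)
    (e10 : x10*y00 + x11*y10 = y10*x00 + y11*x10)
    (hns : x01 ≠ 0 ∨ x10 ≠ 0 ∨ x00 ≠ x11) :
    ∃ α β : ℂ, y00 = α + β*x00 ∧ y01 = β*x01 ∧ y10 = β*x10 ∧ y11 = α + β*x11 := by
  rcases hns with hx | hx | hx
  · refine ⟨y00 - (y01/x01)*x00, y01/x01, by ring, by field_simp, ?_, ?_⟩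
    · field_simp
      linear_combination e00
    · field_simp
      linear_combination e01
  · refine ⟨y00 - (y10/x10)*x00, y10/x10, by ring, ?_, by field_simp, ?_⟩
    · field_simp
      linear_combination -e00
    · field_simp
      linear_combination -e10
  · have hd : x00 - x11 ≠ 0 := sub_ne_zero.mpr hx
    refine ⟨y00 - ((y00-y11)/(x00-x11))*x00, (y00-y11)/(x00-x11), by ring, ?_, ?_, ?_⟩
    · field_simp
      linear_combination e01
    · field_simp
      linear_combination -e10
    · field_simp
      ring

lemma cent2 (X Y : Matrix (Fin 2) (Fin 2) ℂ) (h : X*Y = Y*X)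
    (hns : X 0 1 ≠ 0 ∨ X 1 0 ≠ 0 ∨ X 0 0 ≠ X 1 1) :
    ∃ α β : ℂ, Y = α • (1 : Matrix (Fin 2) (Fin 2) ℂ) + β • X := by
  have h00 : (X*Y) 0 0 = (Y*X) 0 0 := by rw [h]
  have h01 : (X*Y) 0 1 = (Y*X) 0 1 := by rw [h]
  have h10 : (X*Y) 1 0 = (Y*X) 1 0 := by rw [h]
  simp [Matrix.mul_apply, Fin.sum_univ_two] at h00 h01 h10
  obtain ⟨α, β, k00, k01, k10, k11⟩ :=
    cent_aux (X 0 0) (X 0 1) (X 1 0) (X 1 1) (Y 0 0) (Y 0 1) (Y 1 0) (Y 1 1) h00 h01 h10 hns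
  refine ⟨α, β, Matrix.ext ?_⟩
  simp only [Fin.forall_fin_two, Matrix.add_apply, Matrix.smul_apply, Matrix.one_apply,
    smul_eq_mul]
  norm_num
  exact ⟨⟨k00, k01⟩, k10, k11⟩

/-- For a doubly stochastic two-element qubit Kraus family {A₁, A₂}, the four matrices
A_k†A_l ⊕ A_lA_k† are linearly dependent; hence there are no rank-2 extremal doubly
stochastic completely positive qubit maps. -/
theorem no_rank_two_extremal_doubly_stochastic_qubit
    (A : Fin 2 → Matrix (Fin 2) (Fin 2) ℂ)
    (hTP : A 0 * (A 0)ᴴ + A 1 * (A 1)ᴴ = 1)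
    (hUn : (A 0)ᴴ * A 0 + (A 1)ᴴ * A 1 = 1) :
    ¬ LinearIndependent ℂ (fun kl : Fin 2 × Fin 2 =>
        Matrix.fromBlocks ((A kl.1)ᴴ * A kl.2) 0 0 (A kl.2 * (A kl.1)ᴴ)) := by
  have h1b : A 1 * (A 1)ᴴ = 1 - A 0 * (A 0)ᴴ := eq_sub_of_add_eq' hTP
  have h2b : (A 1)ᴴ * A 1 = 1 - (A 0)ᴴ * A 0 := eq_sub_of_add_eq' hUn
  have E : A 0 * (A 0)ᴴ * A 1 = A 1 * ((A 0)ᴴ * A 0) := by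
    have h1a : A 0 * (A 0)ᴴ = 1 - A 1 * (A 1)ᴴ := eq_sub_of_add_eq hTP
    have h2a : (A 0)ᴴ * A 0 = 1 - (A 1)ᴴ * A 1 := eq_sub_of_add_eq hUn
    rw [h1a, h2a]; noncomm_ring
  have S00 : A 0 * ((A 0)ᴴ * A 0) * (A 0)ᴴ + A 1 * ((A 0)ᴴ * A 0) * (A 1)ᴴ
      = A 0 * (A 0)ᴴ := by
    have t1 : A 1 * ((A 0)ᴴ * A 0) * (A 1)ᴴ = A 1 * (A 1)ᴴ * (A 0 * (A 0)ᴴ) := by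
      have h1a : A 0 * (A 0)ᴴ = 1 - A 1 * (A 1)ᴴ := eq_sub_of_add_eq hTP
      have h2a : (A 0)ᴴ * A 0 = 1 - (A 1)ᴴ * A 1 := eq_sub_of_add_eq hUn
      rw [h1a, h2a]; noncomm_ring
    rw [t1, h1b]; noncomm_ring
  have S01 : A 0 * ((A 0)ᴴ * A 1) * (A 0)ᴴ + A 1 * ((A 0)ᴴ * A 1) * (A 1)ᴴ
      = A 1 * (A 0)ᴴ := by
    have u1 : A 0 * ((A 0)ᴴ * A 1) = A 1 * ((A 0)ᴴ * A 0) := by rw [← mul_assoc, E]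
    have u2 : A 1 * ((A 0)ᴴ * A 1) * (A 1)ᴴ = A 1 * (A 0)ᴴ * (1 - A 0 * (A 0)ᴴ) := by
      rw [← h1b]; noncomm_ring
    rw [u1, u2]; noncomm_ring
  rw [Fintype.not_linearIndependent_iff]
  by_cases hns : ((A 0)ᴴ * A 0) 0 1 ≠ 0 ∨ ((A 0)ᴴ * A 0) 1 0 ≠ 0
      ∨ ((A 0)ᴴ * A 0) 0 0 ≠ ((A 0)ᴴ * A 0) 1 1
  · -- nonscalar case
    have hcomm : ((A 0)ᴴ * A 0) * ((A 0)ᴴ * A 1) = ((A 0)ᴴ * A 1) * ((A 0)ᴴ * A 0) := by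
      calc ((A 0)ᴴ * A 0) * ((A 0)ᴴ * A 1) = (A 0)ᴴ * (A 0 * (A 0)ᴴ * A 1) := by noncomm_ring
        _ = (A 0)ᴴ * (A 1 * ((A 0)ᴴ * A 0)) := by rw [E]
        _ = ((A 0)ᴴ * A 1) * ((A 0)ᴴ * A 0) := by noncomm_ring
    obtain ⟨α, β, hB⟩ := cent2 _ _ hcomm hns
    have hC : A 1 * (A 0)ᴴ = α • (1 : Matrix (Fin 2) (Fin 2) ℂ) + β • (A 0 * (A 0)ᴴ) := by
      rw [← S01, hB]
      simp only [Matrix.mul_add, Matrix.add_mul, Matrix.mul_smul, Matrix.smul_mul,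
        Matrix.mul_one, Matrix.one_mul]
      conv_rhs => rw [← S00, ← hTP]
      simp only [smul_add]
      abel
    refine ⟨fun kl => ![![α + β, -1], ![0, α]] kl.1 kl.2, ?_, ⟨(0, 1), by simp⟩⟩
    rw [Fintype.sum_prod_type]
    simp only [Fin.sum_univ_two, Matrix.cons_val_zero, Matrix.cons_val_one, Matrix.head_cons,
      Matrix.fromBlocks_smul, Matrix.fromBlocks_add, smul_zero, zero_smul, add_zero, zero_add]
    rw [show ((α + β) • ((A 0)ᴴ * A 0) + (-1 : ℂ) • ((A 0)ᴴ * A 1)) + α • ((A 1)ᴴ * A 1) = 0 by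
      rw [hB, h2b]; module]
    rw [show ((α + β) • (A 0 * (A 0)ᴴ) + (-1 : ℂ) • (A 1 * (A 0)ᴴ)) + α • (A 1 * (A 1)ᴴ) = 0 by
      rw [hC, h1b]; module]
    exact Matrix.fromBlocks_zero
  · -- scalar case
    push_neg at hns
    obtain ⟨hz1, hz2, hz3⟩ := hns
    set p : ℂ := ((A 0)ᴴ * A 0) 0 0 with hp
    have hP : (A 0)ᴴ * A 0 = p • (1 : Matrix (Fin 2) (Fin 2) ℂ) := by
      refine Matrix.ext ?_
      simp only [Fin.forall_fin_two, Matrix.smul_apply, Matrix.one_apply, smul_eq_mul]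
      norm_num
      exact ⟨⟨hp.symm, hz1⟩, hz2, hz3.symm⟩
    have hQ : A 0 * (A 0)ᴴ = p • (1 : Matrix (Fin 2) (Fin 2) ℂ) := by
      rw [← S00, hP]
      simp only [Matrix.mul_smul, Matrix.smul_mul, Matrix.mul_one, Matrix.one_mul]
      rw [← smul_add, hTP]
    refine ⟨fun kl => ![![1 - p, 0], ![0, -p]] kl.1 kl.2, ?_, ?_⟩
    · rw [Fintype.sum_prod_type]
      simp only [Fin.sum_univ_two, Matrix.cons_val_zero, Matrix.cons_val_one, Matrix.head_cons,
        Matrix.fromBlocks_smul, Matrix.fromBlocks_add, smul_zero, zero_smul, add_zero, zero_add]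
      rw [show ((1 - p) • ((A 0)ᴴ * A 0)) + (-p) • ((A 1)ᴴ * A 1) = 0 by
        rw [hP, h2b, hP]; module]
      rw [show ((1 - p) • (A 0 * (A 0)ᴴ)) + (-p) • (A 1 * (A 1)ᴴ) = 0 by
        rw [hQ, h1b, hQ]; module]
      exact Matrix.fromBlocks_zero
    · by_cases hp0 : p = 0
      · exact ⟨(0, 0), by simp [hp0]⟩
      · exact ⟨(1, 1), by simpa using hp0⟩
end
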